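/- arXiv:2504.15180 — 7 statements merged into one kernel-verified Lean document; each statement's English description precedes it below -/
import Mathlib

section
/- Let n = 1 and d_j = j^{−2} for j ∈ ℕ (so k_j(x) = (j/2)e^{−j|x|}). Suppose K ∈ L¹(ℝ) is even with K(x) = J(|x|), J ∈ C([0,∞)), and the limit lim_{r→∞} e^r J(r) exists; set h(λ) := J(−log λ)/λ for λ ∈ (0,1] and h(0) := lim_{r→∞} e^r J(r). Then for any N ∈ ℕ and any real constants α₁, …, α_{N+1}, ‖K − K_{N+1}‖_{L¹(ℝ)} ≤ 2 · max_{λ∈[0,1]} |h(λ) − P_N(λ)|, where P_N(λ) := Σ_{j=0}^N α_{j+1} ((j+1)/2) λ^j and K_{N+1} := Σ_{j=1}^{N+1} α_j k_j. -/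
open MeasureTheory Real Set Filter
open scoped ENNReal NNReal

noncomputable section

/-- Euclidean space `ℝⁿ`. -/
abbrev Eu (n : ℕ) := EuclideanSpace ℝ (Fin n)

/-- The heat kernel `H(t,x;D) = (4πDt)^{-n/2} exp(-|x|²/(4Dt))`. -/
noncomputable def heatK (n : ℕ) (D t : ℝ) (x : Eu n) : ℝ :=
  (4 * π * D * t) ^ (-(n : ℝ) / 2) * Real.exp (-‖x‖ ^ 2 / (4 * D * t))

/-- Spatial convolution `(K*u)(x) = ∫ K(x-y) u(y) dy`. -/
noncomputable def conv {n : ℕ} (K u : Eu n → ℝ) (x : Eu n) : ℝ := ∫ y, K (x - y) * u y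

/-- Membership in `BC(ℝⁿ) ∩ Lᵖ(ℝⁿ)`. -/
def InBCLp {n : ℕ} (p : ℝ≥0∞) (g : Eu n → ℝ) : Prop :=
  Continuous g ∧ (∃ M, ∀ x, |g x| ≤ M) ∧ MemLp g p volume

/-- `u ∈ C([0,T]; BC(ℝⁿ) ∩ Lᵖ(ℝⁿ))`: membership for every time, and continuity in
time with respect to the sup-norm together with the `Lᵖ` norm. -/
def ContBCLp {n : ℕ} (T : ℝ) (p : ℝ≥0∞) (u : ℝ → Eu n → ℝ) : Prop :=
  (∀ t ∈ Icc (0:ℝ) T, InBCLp p (u t)) ∧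
  ∀ t₀ ∈ Icc (0:ℝ) T,
    Tendsto (fun t => eLpNorm (fun x => u t x - u t₀ x) ⊤ volume
      + eLpNorm (fun x => u t x - u t₀ x) p volume) (nhdsWithin t₀ (Icc 0 T)) (nhds 0)

/-- `f(0,0) = 0` together with the global Lipschitz estimate with constant `Cf`. -/
def LipF (f : ℝ → ℝ → ℝ) (Cf : ℝ) : Prop :=
  f 0 0 = 0 ∧ 0 < Cf ∧ ∀ u₁ v₁ u₂ v₂ : ℝ, |f u₁ v₁ - f u₂ v₂| ≤ Cf * (|u₁ - u₂| + |v₁ - v₂|)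

/-- A radial function on `ℝⁿ`. -/
def IsRadial {n : ℕ} (K : Eu n → ℝ) : Prop := ∀ x y : Eu n, ‖x‖ = ‖y‖ → K x = K y

/-- Mild solution of the nonlocal problem (NP) on `[0,T]`. -/
def IsMildNP {n : ℕ} (D : ℝ) (f : ℝ → ℝ → ℝ) (K : Eu n → ℝ) (p : ℝ≥0∞) (T : ℝ)
    (u₀ : Eu n → ℝ) (u : ℝ → Eu n → ℝ) : Prop :=
  ContBCLp T p u ∧ u 0 = u₀ ∧
  ∀ t ∈ Ioc (0:ℝ) T, ∀ x,
    u t x = conv (heatK n D t) u₀ x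
      + ∫ s in (0:ℝ)..t, conv (heatK n D (t - s)) (fun y => f (u s y) (conv K (u s) y)) x

/-- The modified Bessel function of the second kind
`M_ν(r) = ∫₀^∞ e^{-r cosh s} cosh (ν s) ds`. -/
noncomputable def besselM (ν r : ℝ) : ℝ :=
  ∫ s in Ioi (0:ℝ), Real.exp (-r * Real.cosh s) * Real.cosh (ν * s)

/-- `G(r) = (2π)^{-n/2} (1/r)^{n/2-1} M_{n/2-1}(r)`. -/
noncomputable def greenG (n : ℕ) (r : ℝ) : ℝ :=
  (2 * π) ^ (-(n : ℝ) / 2) * r ^ (-((n : ℝ) / 2 - 1)) * besselM ((n : ℝ) / 2 - 1) r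

/-- The Green function `k_d(x) = d^{-n/2} G(|x|/√d)` of `-dΔ + 1` on `ℝⁿ`. -/
noncomputable def greenK (n : ℕ) (d : ℝ) (x : Eu n) : ℝ :=
  d ^ (-(n : ℝ) / 2) * greenG n (‖x‖ / Real.sqrt d)

/-- Mild solution of the reaction–diffusion system (RD_δ) on `[0,T]` with the
initial condition `(u₀, k₁*u₀, …, k_N*u₀)`. -/
def IsMildRD {n : ℕ} (N : ℕ) (D δ : ℝ) (f : ℝ → ℝ → ℝ) (α d : Fin N → ℝ) (p : ℝ≥0∞) (T : ℝ)
    (u₀ : Eu n → ℝ) (u : ℝ → Eu n → ℝ) (v : Fin N → ℝ → Eu n → ℝ) : Prop :=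
  ContBCLp T p u ∧ (∀ j, ContBCLp T p (v j)) ∧
  u 0 = u₀ ∧ (∀ j, v j 0 = conv (greenK n (d j)) u₀) ∧
  (∀ t ∈ Ioc (0:ℝ) T, ∀ x,
    u t x = conv (heatK n D t) u₀ x
      + ∫ s in (0:ℝ)..t, conv (heatK n D (t - s))
          (fun y => f (u s y) (∑ j, α j * v j s y)) x) ∧
  (∀ j, ∀ t ∈ Ioc (0:ℝ) T, ∀ x,
    v j t x = Real.exp (-t / δ) * conv (heatK n (d j / δ) t) (conv (greenK n (d j)) u₀) x
      + (1 / δ) * ∫ s in (0:ℝ)..t,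
          Real.exp (-(t - s) / δ) * conv (heatK n (d j / δ) (t - s)) (u s) x)

/-- The Laplacian of `g : ℝⁿ → ℝ`. -/
noncomputable def lap {n : ℕ} (g : Eu n → ℝ) (x : Eu n) : ℝ :=
  ∑ i : Fin n, iteratedFDeriv ℝ 2 g x ![EuclideanSpace.single i 1, EuclideanSpace.single i 1]

/-- `u ∈ C^{1,2}((0,T] × ℝⁿ)`. -/
def IsC12 {n : ℕ} (T : ℝ) (u : ℝ → Eu n → ℝ) : Prop :=
  (∀ x, DifferentiableOn ℝ (fun t => u t x) (Ioc 0 T)) ∧ ∀ t ∈ Ioc (0:ℝ) T, ContDiff ℝ 2 (u t)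

/-- Classical solution of (NP) on `(0,T]`. -/
def IsClassicalNP {n : ℕ} (D : ℝ) (f : ℝ → ℝ → ℝ) (K : Eu n → ℝ) (p : ℝ≥0∞) (T : ℝ)
    (u₀ : Eu n → ℝ) (u : ℝ → Eu n → ℝ) : Prop :=
  ContBCLp T p u ∧ u 0 = u₀ ∧ IsC12 T u ∧
  ∀ t ∈ Ioc (0:ℝ) T, ∀ x,
    HasDerivAt (fun s => u s x) (D * lap (u t) x + f (u t x) (conv K (u t) x)) t

/-- The Abel-type transform `A(r) = -(2r/π) ∫₀^∞ J'(r cosh s) ds`. -/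
noncomputable def abelA (J : ℝ → ℝ) (r : ℝ) : ℝ :=
  -(2 * r / π) * ∫ s in Ioi (0:ℝ), deriv J (r * Real.cosh s)

/-- The modulus of continuity of `g` on `[0,1]`. -/
noncomputable def modCont (g : ℝ → ℝ) (η : ℝ) : ℝ :=
  sSup {c | ∃ l₁ ∈ Icc (0:ℝ) 1, ∃ l₂ ∈ Icc (0:ℝ) 1, |l₁ - l₂| ≤ η ∧ c = |g l₁ - g l₂|}

/-- The Bernstein coefficients `β_{j,N}[h]`. -/
noncomputable def bernCoef (h : ℝ → ℝ) (N j : ℕ) : ℝ :=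
  ∑ ν ∈ Finset.range (j + 1),
    (-1 : ℝ) ^ (j - ν) * h ((ν : ℝ) / (N : ℝ)) * (N.choose j : ℝ) * (j.choose ν : ℝ)

/-- The constants `c_{j,n}`. -/
noncomputable def cjn (n j : ℕ) : ℝ :=
  if n = 1 then ((j : ℝ) + 1) / 2
  else if n = 2 then ((j : ℝ) + 1) ^ 2 / (2 * π)
  else ((j : ℝ) + 1) ^ 2 / (4 * π)

/-- The Chebyshev nodes `r_{j,N+1} = 1/2 + (1/2) cos((2j+1)π/(2(N+1)))`. -/
noncomputable def chebNode (N : ℕ) (j : Fin (N + 1)) : ℝ :=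
  1 / 2 + Real.cos ((2 * (j : ℝ) + 1) * π / (2 * ((N : ℝ) + 1))) / 2

/-- The coefficients `l_{j,N}[h]` of the monomial expansion of the Lagrange
interpolation polynomial of `h` at the Chebyshev nodes `r_{0,N+1}, …, r_{N,N+1}`. -/
noncomputable def lagCoef (h : ℝ → ℝ) (N j : ℕ) : ℝ :=
  ((Lagrange.interpolate (Finset.univ : Finset (Fin (N + 1))) (chebNode N))
    (fun i => h (chebNode N i))).coeff j

/-- The dimension-dependent assumption on the kernel `K`, together with the
associated function `h` on `[0,1]` (Assumption 2.1 of the paper). -/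
def KernelAssumptionH (n : ℕ) (K : Eu n → ℝ) (h : ℝ → ℝ) : Prop :=
  Integrable K volume ∧
  ((n = 1 ∧ ∃ J : ℝ → ℝ, (∀ x, K x = J ‖x‖) ∧ ContinuousOn J (Ici 0) ∧
      ∃ L, Tendsto (fun r => Real.exp r * J r) atTop (nhds L) ∧
        h 0 = L ∧ ∀ lam ∈ Ioc (0:ℝ) 1, h lam = J (-Real.log lam) / lam) ∨
   (n = 2 ∧ ∃ J : ℝ → ℝ, (∀ x, K x = J ‖x‖) ∧ ContDiffOn ℝ 1 J (Ici 0) ∧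
      (∃ a > (1/2 : ℝ), ∃ L, Tendsto (fun r => r ^ a * Real.exp r * deriv J r) atTop (nhds L)) ∧
      h 0 = 0 ∧ ∀ lam ∈ Ioc (0:ℝ) 1, h lam = abelA J (-Real.log lam) / lam) ∨
   (n = 3 ∧ ∃ J : ℝ → ℝ, (∀ x, x ≠ 0 → K x = J ‖x‖) ∧ ContinuousOn J (Ioi 0) ∧
      (∃ L₀, Tendsto (fun r => r * J r) (nhdsWithin 0 (Ioi 0)) (nhds L₀) ∧ h 1 = L₀) ∧
      (∃ Li, Tendsto (fun r => r * Real.exp r * J r) atTop (nhds Li) ∧ h 0 = Li) ∧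
      ∀ lam ∈ Ioo (0:ℝ) 1, h lam = -Real.log lam * J (-Real.log lam) / lam))

/-- The dimension-dependent assumption on the kernel `K` (Assumption 2.1). -/
def KernelAssumption (n : ℕ) (K : Eu n → ℝ) : Prop :=
  Integrable K volume ∧
  ((n = 1 ∧ ∃ J : ℝ → ℝ, (∀ x, K x = J ‖x‖) ∧ ContinuousOn J (Ici 0) ∧
      ∃ L, Tendsto (fun r => Real.exp r * J r) atTop (nhds L)) ∨
   (n = 2 ∧ ∃ J : ℝ → ℝ, (∀ x, K x = J ‖x‖) ∧ ContDiffOn ℝ 1 J (Ici 0) ∧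
      ∃ a > (1/2 : ℝ), ∃ L, Tendsto (fun r => r ^ a * Real.exp r * deriv J r) atTop (nhds L)) ∨
   (n = 3 ∧ ∃ J : ℝ → ℝ, (∀ x, x ≠ 0 → K x = J ‖x‖) ∧ ContinuousOn J (Ioi 0) ∧
      (∃ L₀, Tendsto (fun r => r * J r) (nhdsWithin 0 (Ioi 0)) (nhds L₀)) ∧
      (∃ Li, Tendsto (fun r => r * Real.exp r * J r) atTop (nhds Li))))

/-- One-dimensional `L¹` kernel-approximation estimate:
`‖K - K_{N+1}‖_{L¹(ℝ)} ≤ 2 · max_{λ∈[0,1]} |h(λ) - P_N(λ)|`. -/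
theorem statement5 (K J : ℝ → ℝ) (L : ℝ)
    (hK1 : Integrable K volume) (hKJ : ∀ x : ℝ, K x = J |x|)
    (hJc : ContinuousOn J (Ici 0))
    (hL : Tendsto (fun r => Real.exp r * J r) atTop (nhds L))
    (N : ℕ) (α : Fin (N + 1) → ℝ) (C : ℝ)
    (hC : ∀ lam ∈ Icc (0:ℝ) 1,
      |(if lam = 0 then L else J (-Real.log lam) / lam)
        - ∑ j : Fin (N + 1), α j * (((j : ℝ) + 1) / 2) * lam ^ (j : ℕ)| ≤ C) :
    (∫ x : ℝ, |K x - ∑ j : Fin (N + 1),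
        α j * (((j : ℝ) + 1) / 2) * Real.exp (-((j : ℝ) + 1) * |x|)|) ≤ 2 * C := by  -- nonnegativity of C
  have hC0 : 0 ≤ C := le_trans (abs_nonneg _) (hC 1 ⟨zero_le_one, le_refl 1⟩)
  -- pointwise bound
  have hpt : ∀ x : ℝ, |K x - ∑ j : Fin (N + 1),
      α j * (((j : ℝ) + 1) / 2) * Real.exp (-((j : ℝ) + 1) * |x|)| ≤ C * Real.exp (-|x|) := by
    intro x
    set lam := Real.exp (-|x|) with hlam
    have hlpos : 0 < lam := Real.exp_pos _
    have hl1 : lam ≤ 1 := Real.exp_le_one_iff.mpr (neg_nonpos.mpr (abs_nonneg x))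
    have hne : lam ≠ 0 := hlpos.ne'
    have hlog : -Real.log lam = |x| := by rw [hlam, Real.log_exp, neg_neg]
    have h1 := hC lam ⟨hlpos.le, hl1⟩
    rw [if_neg hne, hlog] at h1
    have key : K x - ∑ j : Fin (N + 1),
        α j * (((j : ℝ) + 1) / 2) * Real.exp (-((j : ℝ) + 1) * |x|)
        = lam * (J |x| / lam - ∑ j : Fin (N + 1),
            α j * (((j : ℝ) + 1) / 2) * lam ^ (j : ℕ)) := by
      rw [hKJ x, mul_sub, mul_div_cancel₀ _ hne, Finset.mul_sum]
      congr 1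
      refine Finset.sum_congr rfl fun j _ => ?_
      have hexp : Real.exp (-((j : ℝ) + 1) * |x|) = lam ^ ((j : ℕ) + 1) := by
        rw [hlam, ← Real.exp_nat_mul]
        congr 1
        push_cast
        ring
      rw [hexp, pow_succ]
      ring
    rw [key, abs_mul, abs_of_pos hlpos, mul_comm C]
    exact mul_le_mul_of_nonneg_left h1 hlpos.le
  -- integrability of the majorant
  have hexpint : Integrable (fun x : ℝ => Real.exp (-|x|)) volume := by
    have h1 : IntegrableOn (fun x : ℝ => Real.exp (-|x|)) (Iic 0) := by
      refine (integrableOn_exp_Iic 0).congr_fun (fun x hx => ?_) measurableSet_Iic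
      rw [abs_of_nonpos (mem_Iic.mp hx), neg_neg]
    have h2 : IntegrableOn (fun x : ℝ => Real.exp (-|x|)) (Ioi 0) := by
      refine (exp_neg_integrableOn_Ioi 0 one_pos).congr_fun (fun x hx => ?_) measurableSet_Ioi
      simp only [abs_of_pos (mem_Ioi.mp hx), neg_one_mul]
    have := h1.union h2
    rwa [Iic_union_Ioi, integrableOn_univ] at this
  have hint : Integrable (fun x : ℝ => C * Real.exp (-|x|)) volume := hexpint.const_mul C
  calc (∫ x : ℝ, |K x - ∑ j : Fin (N + 1),
        α j * (((j : ℝ) + 1) / 2) * Real.exp (-((j : ℝ) + 1) * |x|)|)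
      ≤ ∫ x : ℝ, C * Real.exp (-|x|) :=
        integral_mono_of_nonneg (ae_of_all _ fun x => abs_nonneg _) hint (ae_of_all _ hpt)
    _ = 2 * C := by
        rw [MeasureTheory.integral_const_mul,
          integral_comp_abs (f := fun x => Real.exp (-x)), integral_exp_neg_Ioi_zero]
        ring
end
end

section
/- Let n = 3 and d_j = j^{−2} for j ∈ ℕ (so k_j(x) = (j²/(4π|x|)) e^{−j|x|}). Suppose K ∈ L¹(ℝ³) is radial with K(x) = J(|x|), J ∈ C((0,∞)), and both limits lim_{r→0} r J(r) and lim_{r→∞} r e^r J(r) exist; set h(λ) := −(log λ) J(−log λ)/λ for λ ∈ (0,1), h(0) := lim_{r→∞} r e^r J(r), h(1) := lim_{r→0} r J(r). Then for any N ∈ ℕ and any real constants α₁, …, α_{N+1}, ‖K − K_{N+1}‖_{L¹(ℝ³)} ≤ 4π · max_{λ∈[0,1]} |h(λ) − P_N(λ)|, where P_N(λ) := Σ_{j=0}^N α_{j+1} ((j+1)²/(4π)) λ^j and K_{N+1} := Σ_{j=1}^{N+1} α_j k_j. -/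
open MeasureTheory Real Set Filter
open scoped ENNReal NNReal

noncomputable section

/-- Three-dimensional `L¹` kernel-approximation estimate:
`‖K - K_{N+1}‖_{L¹(ℝ³)} ≤ 4π · max_{λ∈[0,1]} |h(λ) - P_N(λ)|`. -/
theorem statement7 (K : Eu 3 → ℝ) (J : ℝ → ℝ) (L₀ Li : ℝ)
    (hK1 : Integrable K volume) (hKJ : ∀ x : Eu 3, x ≠ 0 → K x = J ‖x‖)
    (hJc : ContinuousOn J (Ioi 0))
    (hL₀ : Tendsto (fun r => r * J r) (nhdsWithin 0 (Ioi 0)) (nhds L₀))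
    (hLi : Tendsto (fun r => r * Real.exp r * J r) atTop (nhds Li))
    (N : ℕ) (α : Fin (N + 1) → ℝ) (C : ℝ)
    (hC : ∀ lam ∈ Icc (0:ℝ) 1,
      |(if lam = 0 then Li else if lam = 1 then L₀ else
          -Real.log lam * J (-Real.log lam) / lam)
        - ∑ j : Fin (N + 1), α j * (((j : ℝ) + 1) ^ 2 / (4 * π)) * lam ^ (j : ℕ)| ≤ C) :
    (∫ x : Eu 3, |K x - ∑ j : Fin (N + 1),
        α j * (((j : ℝ) + 1) ^ 2 / (4 * π * ‖x‖)) * Real.exp (-((j : ℝ) + 1) * ‖x‖)|)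
      ≤ 4 * π * C := by
  have hπ : (0:ℝ) < π := Real.pi_pos
  set F : ℝ → ℝ := fun r => |J r - ∑ j : Fin (N + 1),
      α j * (((j : ℝ) + 1) ^ 2 / (4 * π * r)) * Real.exp (-((j : ℝ) + 1) * r)| with hF
  -- Step 1: rewrite the integral as an integral of a function of the norm
  have h1 : (∫ x : Eu 3, |K x - ∑ j : Fin (N + 1),
        α j * (((j : ℝ) + 1) ^ 2 / (4 * π * ‖x‖)) * Real.exp (-((j : ℝ) + 1) * ‖x‖)|)
      = ∫ x : Eu 3, F ‖x‖ := by
    refine integral_congr_ae ?_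
    have h0 : (volume : Measure (Eu 3)) {(0 : Eu 3)} = 0 := measure_singleton 0
    filter_upwards [compl_mem_ae_iff.2 h0] with x hx
    simp only [hF]
    rw [hKJ x hx]
  -- pointwise bound
  have hpt : ∀ r ∈ Ioi (0:ℝ), r ^ 2 * F r ≤ C * (Real.exp (-r) * r ^ ((2:ℝ) - 1)) := by
    intro r hr
    have hr0 : (0:ℝ) < r := hr
    set lam := Real.exp (-r) with hlamdef
    have hlp : 0 < lam := Real.exp_pos _
    have hl1 : lam < 1 := by
      rw [hlamdef, Real.exp_lt_one_iff]; linarith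
    have hCl := hC lam ⟨hlp.le, hl1.le⟩
    rw [if_neg hlp.ne', if_neg hl1.ne] at hCl
    have hlog : -Real.log lam = r := by rw [hlamdef, Real.log_exp]; ring
    have hexp : ∀ j : Fin (N + 1), Real.exp (-((j : ℝ) + 1) * r) = lam ^ ((j : ℕ) + 1) := by
      intro j
      rw [hlamdef, ← Real.exp_nat_mul]
      congr 1; push_cast; ring
    have key : r ^ 2 * (J r - ∑ j : Fin (N + 1),
          α j * (((j : ℝ) + 1) ^ 2 / (4 * π * r)) * Real.exp (-((j : ℝ) + 1) * r))
        = (r * lam) * ((-Real.log lam * J (-Real.log lam) / lam)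
            - ∑ j : Fin (N + 1), α j * (((j : ℝ) + 1) ^ 2 / (4 * π)) * lam ^ (j : ℕ)) := by
      rw [hlog, mul_sub, mul_sub, Finset.mul_sum, Finset.mul_sum]
      congr 1
      · field_simp
      · refine Finset.sum_congr rfl fun j _ => ?_
        rw [hexp j, pow_succ]
        field_simp; ring
    have habs : r ^ 2 * F r = (r * lam) * |(-Real.log lam * J (-Real.log lam) / lam)
        - ∑ j : Fin (N + 1), α j * (((j : ℝ) + 1) ^ 2 / (4 * π)) * lam ^ (j : ℕ)| := by
      simp only [hF]
      rw [← abs_of_nonneg (by positivity : (0:ℝ) ≤ r ^ 2), ← abs_mul, key, abs_mul,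
        abs_of_nonneg (by positivity : (0:ℝ) ≤ r * lam)]
    have hr21 : r ^ ((2:ℝ) - 1) = r := by
      norm_num
    rw [habs, hr21]
    calc (r * lam) * |(-Real.log lam * J (-Real.log lam) / lam)
          - ∑ j : Fin (N + 1), α j * (((j : ℝ) + 1) ^ 2 / (4 * π)) * lam ^ (j : ℕ)|
        ≤ (r * lam) * C := by
          exact mul_le_mul_of_nonneg_left hCl (by positivity)
      _ = C * (lam * r) := by ring
  -- integrability of the dominating function
  have hgint : IntegrableOn (fun r : ℝ => C * (Real.exp (-r) * r ^ ((2:ℝ) - 1)))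
      (Ioi (0:ℝ)) volume :=
    (Real.GammaIntegral_convergent (by norm_num : (0:ℝ) < 2)).const_mul C
  -- measurability & integrability of the left-hand side
  have hFc : ContinuousOn F (Ioi (0:ℝ)) := by
    simp only [hF]
    refine ContinuousOn.abs (hJc.sub ?_)
    refine continuousOn_finset_sum _ fun j _ => ?_
    refine ContinuousOn.mul (ContinuousOn.mul continuousOn_const ?_) ?_
    · refine ContinuousOn.div continuousOn_const
        ((continuous_const.mul continuous_id).continuousOn) ?_
      intro r hr
      have : (0:ℝ) < r := hr
      positivity
    · exact (Real.continuous_exp.comp (continuous_const.mul continuous_id)).continuousOn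
  have hmeas : AEStronglyMeasurable (fun r : ℝ => r ^ 2 * F r)
      (volume.restrict (Ioi (0:ℝ))) :=
    (((continuous_pow 2).continuousOn).mul hFc).aestronglyMeasurable measurableSet_Ioi
  have hfint : IntegrableOn (fun r : ℝ => r ^ 2 * F r) (Ioi (0:ℝ)) volume := by
    refine Integrable.mono' hgint hmeas ?_
    filter_upwards [ae_restrict_mem measurableSet_Ioi] with r hr
    rw [Real.norm_eq_abs, abs_of_nonneg (by simp only [hF]; positivity)]
    exact hpt r hr
  -- bound the radial integral
  have h3 : (∫ r in Ioi (0:ℝ), r ^ 2 * F r) ≤ C := by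
    calc (∫ r in Ioi (0:ℝ), r ^ 2 * F r)
        ≤ ∫ r in Ioi (0:ℝ), C * (Real.exp (-r) * r ^ ((2:ℝ) - 1)) :=
          setIntegral_mono_on hfint hgint measurableSet_Ioi hpt
      _ = C * ∫ r in Ioi (0:ℝ), Real.exp (-r) * r ^ ((2:ℝ) - 1) := by
          rw [← integral_const_mul]
      _ = C := by
          rw [← Real.Gamma_eq_integral (by norm_num : (0:ℝ) < 2), Real.Gamma_two, mul_one]
  -- volume of the unit ball in ℝ³
  have hG : Real.Gamma ((3:ℝ) / 2 + 1) = 3 / 4 * Real.sqrt π := by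
    rw [Real.Gamma_add_one (by norm_num : (3:ℝ)/2 ≠ 0)]
    have h32 : (3:ℝ) / 2 = 1 / 2 + 1 := by norm_num
    rw [h32, Real.Gamma_add_one (by norm_num : (1:ℝ)/2 ≠ 0), Real.Gamma_one_half_eq]
    ring
  have hball : ((volume : Measure (Eu 3)) (Metric.ball (0 : Eu 3) 1)).toReal = 4 * π / 3 := by
    rw [EuclideanSpace.volume_ball]
    have hsq : Real.sqrt π ^ 3 = π * Real.sqrt π := by
      have : Real.sqrt π ^ 3 = Real.sqrt π ^ 2 * Real.sqrt π := by ring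
      rw [this, Real.sq_sqrt hπ.le]
    have hsπ : (0:ℝ) < Real.sqrt π := Real.sqrt_pos.mpr hπ
    simp only [Fintype.card_fin, ENNReal.ofReal_one, one_pow, one_mul]
    have hc3 : ((3:ℕ):ℝ) = 3 := by norm_num
    rw [hc3, hG, ENNReal.toReal_ofReal (by positivity), hsq]
    field_simp
  -- polar coordinates
  have h2 := MeasureTheory.integral_fun_norm_addHaar (volume : Measure (Eu 3)) F
  have hdim : Module.finrank ℝ (Eu 3) = 3 := finrank_euclideanSpace_fin
  rw [hdim] at h2
  rw [h1, h2, measureReal_def, hball]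
  simp only [nsmul_eq_mul, smul_eq_mul, Nat.cast_ofNat]
  have hred : (∫ y in Ioi (0:ℝ), y ^ (3 - 1) * F y) = ∫ r in Ioi (0:ℝ), r ^ 2 * F r := by
    norm_num
  rw [hred]
  have := mul_le_mul_of_nonneg_left h3 (le_of_lt (by positivity : (0:ℝ) < 4 * π))
  nlinarith [this]
end
end

section
/- Let n = 1 and d_j = j^{−2} for j ∈ ℕ. Suppose K ∈ L¹(ℝ) is even with K(x) = J(|x|), J ∈ C([0,∞)), and the limit lim_{r→∞} e^r J(r) exists; set h(λ) := J(−log λ)/λ for λ ∈ (0,1] and h(0) := lim_{r→∞} e^r J(r). Then for any N ∈ ℕ, any real α₁, …, α_{N+1}, and every x ∈ ℝ, |K(x) − K_{N+1}(x)| ≤ e^{−|x|} · max_{λ∈[0,1]} |h(λ) − P_N(λ)|, where P_N(λ) := Σ_{j=0}^N α_{j+1} ((j+1)/2) λ^j and K_{N+1} := Σ_{j=1}^{N+1} α_j k_j. -/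
open MeasureTheory Real Set Filter
open scoped ENNReal NNReal

noncomputable section

/-- One-dimensional pointwise kernel-approximation estimate:
`|K(x) - K_{N+1}(x)| ≤ e^{-|x|} · max_{λ∈[0,1]} |h(λ) - P_N(λ)|`. -/
theorem statement8 (K J : ℝ → ℝ) (L : ℝ)
    (hK1 : Integrable K volume) (hKJ : ∀ x : ℝ, K x = J |x|)
    (hJc : ContinuousOn J (Ici 0))
    (hL : Tendsto (fun r => Real.exp r * J r) atTop (nhds L))
    (N : ℕ) (α : Fin (N + 1) → ℝ) (C : ℝ)
    (hC : ∀ lam ∈ Icc (0:ℝ) 1,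
      |(if lam = 0 then L else J (-Real.log lam) / lam)
        - ∑ j : Fin (N + 1), α j * (((j : ℝ) + 1) / 2) * lam ^ (j : ℕ)| ≤ C) :
    ∀ x : ℝ, |K x - ∑ j : Fin (N + 1),
        α j * (((j : ℝ) + 1) / 2) * Real.exp (-((j : ℝ) + 1) * |x|)|
      ≤ Real.exp (-|x|) * C := by
  intro x
  set lam := Real.exp (-|x|) with hlamdef
  have hlam0 : 0 < lam := Real.exp_pos _
  have hlam1 : lam ≤ 1 := Real.exp_le_one_iff.mpr (neg_nonpos.mpr (abs_nonneg x))
  have hC' := hC lam ⟨hlam0.le, hlam1⟩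
  rw [if_neg hlam0.ne'] at hC'
  have hlog : -Real.log lam = |x| := by rw [hlamdef, Real.log_exp]; ring
  rw [hlog, ← hKJ] at hC'
  have hexp : ∀ j : Fin (N + 1),
      Real.exp (-((j : ℝ) + 1) * |x|) = lam * lam ^ (j : ℕ) := by
    intro j
    rw [hlamdef, ← Real.exp_nat_mul, ← Real.exp_add]
    push_cast
    ring_nf
  have key : K x - ∑ j : Fin (N + 1),
      α j * (((j : ℝ) + 1) / 2) * Real.exp (-((j : ℝ) + 1) * |x|)
      = lam * (K x / lam - ∑ j : Fin (N + 1), α j * (((j : ℝ) + 1) / 2) * lam ^ (j : ℕ)) := by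
    rw [mul_sub, Finset.mul_sum, mul_div_cancel₀ _ hlam0.ne']
    congr 1
    refine Finset.sum_congr rfl fun j _ => ?_
    rw [hexp j]; ring
  rw [key, abs_mul, abs_of_pos hlam0]
  exact mul_le_mul_of_nonneg_left hC' hlam0.le
end
end

section
/- Let n = 2 and d_j = j^{−2} for j ∈ ℕ. Suppose K ∈ L¹(ℝ²) is radial with K(x) = J(|x|), J ∈ C¹([0,∞)), and there exists α > 1/2 such that lim_{r→∞} r^α e^r J'(r) exists; define A(r) := −(2r/π) ∫₀^∞ J'(r cosh s) ds, set h(λ) := A(−log λ)/λ for λ ∈ (0,1] and h(0) := 0. Then for any N ∈ ℕ, any real α₁, …, α_{N+1}, and every x ∈ ℝ² \ {0}, |K(x) − K_{N+1}(x)| ≤ M₀(|x|) · max_{λ∈[0,1]} |h(λ) − P_N(λ)|, where P_N(λ) := Σ_{j=0}^N α_{j+1} ((j+1)²/(2π)) λ^j and K_{N+1} := Σ_{j=1}^{N+1} α_j k_j. -/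
open MeasureTheory Real Set Filter
open scoped ENNReal NNReal

noncomputable section

/-- 1D lintegral change of variables. -/
theorem my_lintegral_image {s : Set ℝ} {f f' : ℝ → ℝ} (hs : MeasurableSet s)
    (hf' : ∀ x ∈ s, HasDerivWithinAt f (f' x) s x) (hf : InjOn f s) (g : ℝ → ℝ≥0∞) :
    ∫⁻ x in f '' s, g x = ∫⁻ x in s, ENNReal.ofReal |f' x| * g (f x) := by
  simpa only [ContinuousLinearMap.det_toSpanSingleton] using
    MeasureTheory.lintegral_image_eq_lintegral_abs_det_fderiv_mul volume hs
      (fun x hx => (hf' x hx).hasFDerivWithinAt) hf g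

theorem cosh_image {ρ : ℝ} (hρ : 0 < ρ) : (fun t => ρ * Real.cosh t) '' Ioi 0 = Ioi ρ := by
  ext u
  constructor
  · rintro ⟨t, ht, rfl⟩
    have h1 : 1 < Real.cosh t := Real.one_lt_cosh.2 (ne_of_gt ht)
    have : ρ * 1 < ρ * Real.cosh t := by nlinarith
    simpa using this
  · intro hu
    have hu' : 1 < u / ρ := (one_lt_div hρ).2 hu
    have hy : 0 < Real.sqrt ((u / ρ) ^ 2 - 1) := by
      apply Real.sqrt_pos.2; nlinarith
    refine ⟨Real.arsinh (Real.sqrt ((u / ρ) ^ 2 - 1)), Real.arsinh_pos_iff.2 hy, ?_⟩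
    have : Real.cosh (Real.arsinh (Real.sqrt ((u / ρ) ^ 2 - 1))) = u / ρ := by
      rw [Real.cosh_arsinh, Real.sq_sqrt (by nlinarith)]
      rw [show 1 + ((u/ρ)^2 - 1) = (u/ρ)^2 by ring, Real.sqrt_sq (by positivity)]
    simp only []
    rw [this]
    field_simp

theorem cosh_injOn : InjOn (fun t => Real.cosh t) (Ioi 0) := by
  intro a ha b hb hab
  simp only at hab
  rcases lt_trichotomy a b with h | h | h
  · exfalso
    have : Real.cosh a < Real.cosh b := Real.cosh_lt_cosh.2 (by
      rw [abs_of_pos ha, abs_of_pos hb]; exact h)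
    linarith [this, hab.le, hab.ge]
  · exact h
  · exfalso
    have : Real.cosh b < Real.cosh a := Real.cosh_lt_cosh.2 (by
      rw [abs_of_pos hb, abs_of_pos ha]; exact h)
    linarith [this, hab.le]

/-- substitution `u = ρ cosh t`. -/
theorem subst_cosh {ρ : ℝ} (hρ : 0 < ρ) (G : ℝ → ℝ≥0∞) :
    ∫⁻ u in Ioi ρ, G u * ENNReal.ofReal (1 / Real.sqrt (u ^ 2 - ρ ^ 2))
      = ∫⁻ t in Ioi 0, G (ρ * Real.cosh t) := by
  have hf' : ∀ t ∈ Ioi (0:ℝ), HasDerivWithinAt (fun t => ρ * Real.cosh t)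
      (ρ * Real.sinh t) (Ioi 0) t :=
    fun t _ => ((Real.hasDerivAt_cosh t).const_mul ρ).hasDerivWithinAt
  have hinj : InjOn (fun t => ρ * Real.cosh t) (Ioi 0) := by
    intro a ha b hb hab
    exact cosh_injOn ha hb (mul_left_cancel₀ (ne_of_gt hρ) hab)
  rw [← cosh_image hρ, my_lintegral_image measurableSet_Ioi hf' hinj]
  refine setLIntegral_congr_fun measurableSet_Ioi ?_
  intro t ht
  have hsinh : 0 < Real.sinh t := Real.sinh_pos_iff.2 ht
  have hsq : (ρ * Real.cosh t) ^ 2 - ρ ^ 2 = (ρ * Real.sinh t) ^ 2 := by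
    have := Real.cosh_sq t
    nlinarith
  beta_reduce
  rw [hsq, Real.sqrt_sq (by positivity), abs_of_pos (by positivity)]
  rw [mul_comm (G _) _, ← mul_assoc, ← ENNReal.ofReal_mul (by positivity)]
  rw [mul_one_div_cancel (by positivity), ENNReal.ofReal_one, one_mul]

theorem beta_lintegral {r u : ℝ} (hr : 0 < r) (hru : r < u) :
    ∫⁻ w in Ioo r u,
        ENNReal.ofReal (w / (Real.sqrt (w ^ 2 - r ^ 2) * Real.sqrt (u ^ 2 - w ^ 2)))
      = ENNReal.ofReal (π / 2) := by
  set c : ℝ := (u ^ 2 + r ^ 2) / 2 with hc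
  set R : ℝ := (u ^ 2 - r ^ 2) / 2 with hR
  have hRpos : 0 < R := by rw [hR]; nlinarith
  set f : ℝ → ℝ := fun θ => Real.sqrt (c + R * Real.sin θ) with hf
  set s : Set ℝ := Ioo (-(π / 2)) (π / 2) with hs
  have hsin : ∀ θ ∈ s, -1 < Real.sin θ ∧ Real.sin θ < 1 := by
    intro θ hθ
    constructor
    · have := Real.strictMonoOn_sin (a := -(π/2)) (b := θ) (by
        constructor <;> [linarith [hθ.1]; linarith [hθ.2, Real.pi_pos]]) (by
        constructor <;> [linarith [hθ.1]; linarith [hθ.2]]) hθ.1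
      simpa using this
    · have := Real.strictMonoOn_sin (a := θ) (b := π/2) (by
        constructor <;> [linarith [hθ.1]; linarith [hθ.2]]) (by
        constructor <;> [linarith [Real.pi_pos]; linarith]) hθ.2
      simpa using this
  have harg : ∀ θ ∈ s, r ^ 2 < c + R * Real.sin θ ∧ c + R * Real.sin θ < u ^ 2 := by
    intro θ hθ
    obtain ⟨h1, h2⟩ := hsin θ hθ
    constructor
    · have : c - R = r ^ 2 := by rw [hc, hR]; ring
      nlinarith
    · have : c + R = u ^ 2 := by rw [hc, hR]; ring
      nlinarith
  have hmem : ∀ θ ∈ s, f θ ∈ Ioo r u := by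
    intro θ hθ
    obtain ⟨h1, h2⟩ := harg θ hθ
    constructor
    · have : Real.sqrt (r ^ 2) < Real.sqrt (c + R * Real.sin θ) :=
        Real.sqrt_lt_sqrt (by positivity) h1
      rwa [Real.sqrt_sq hr.le] at this
    · have hnn : (0:ℝ) ≤ c + R * Real.sin θ := by nlinarith [(harg θ hθ).1]
      have : Real.sqrt (c + R * Real.sin θ) < Real.sqrt (u ^ 2) :=
        Real.sqrt_lt_sqrt hnn h2
      rwa [Real.sqrt_sq (le_of_lt (lt_trans hr hru))] at this
  have himg : f '' s = Ioo r u := by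
    apply Subset.antisymm
    · rintro _ ⟨θ, hθ, rfl⟩; exact hmem θ hθ
    · intro w hw
      have hw0 : 0 < w := lt_trans hr hw.1
      have hwsq : r ^ 2 < w ^ 2 ∧ w ^ 2 < u ^ 2 := by
        constructor <;> nlinarith [hw.1, hw.2]
      have hval : -1 < (w ^ 2 - c) / R ∧ (w ^ 2 - c) / R < 1 := by
        constructor
        · rw [lt_div_iff₀ hRpos]; have : c - R = r ^ 2 := by rw [hc, hR]; ring
          nlinarith [hwsq.1]
        · rw [div_lt_iff₀ hRpos]; have : c + R = u ^ 2 := by rw [hc, hR]; ring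
          nlinarith [hwsq.2]
      refine ⟨Real.arcsin ((w ^ 2 - c) / R), ?_, ?_⟩
      · exact ⟨Real.neg_pi_div_two_lt_arcsin.2 hval.1, Real.arcsin_lt_pi_div_two.2 hval.2⟩
      · rw [hf]; simp only []
        rw [Real.sin_arcsin hval.1.le hval.2.le]
        rw [show c + R * ((w ^ 2 - c) / R) = w ^ 2 by field_simp; ring, Real.sqrt_sq hw0.le]
  have hderiv : ∀ θ ∈ s, HasDerivWithinAt f
      (1 / (2 * Real.sqrt (c + R * Real.sin θ)) * (R * Real.cos θ)) s θ := by
    intro θ hθ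
    have h1 : HasDerivAt (fun θ : ℝ => c + R * Real.sin θ) (R * Real.cos θ) θ :=
      ((Real.hasDerivAt_sin θ).const_mul R).const_add c
    have h2 : HasDerivAt Real.sqrt (1 / (2 * Real.sqrt (c + R * Real.sin θ)))
        (c + R * Real.sin θ) := Real.hasDerivAt_sqrt (by nlinarith [(harg θ hθ).1])
    exact (h2.comp θ h1).hasDerivWithinAt
  have hinj : InjOn f s := by
    have : StrictMonoOn f s := by
      intro a ha b hb hab
      have hsab : Real.sin a < Real.sin b := Real.strictMonoOn_sin
        ⟨ha.1.le, ha.2.le⟩ ⟨hb.1.le, hb.2.le⟩ hab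
      exact Real.sqrt_lt_sqrt (by nlinarith [(harg a ha).1]) (by nlinarith)
    exact this.injOn
  rw [← himg, my_lintegral_image measurableSet_Ioo hderiv hinj]
  have key : ∀ θ ∈ s,
      ENNReal.ofReal |1 / (2 * Real.sqrt (c + R * Real.sin θ)) * (R * Real.cos θ)| *
        ENNReal.ofReal (f θ / (Real.sqrt (f θ ^ 2 - r ^ 2) * Real.sqrt (u ^ 2 - f θ ^ 2)))
      = ENNReal.ofReal (1 / 2) := by
    intro θ hθ
    obtain ⟨h1, h2⟩ := harg θ hθ
    have hx : (0:ℝ) < c + R * Real.sin θ := by nlinarith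
    have hfsq : f θ ^ 2 = c + R * Real.sin θ := Real.sq_sqrt hx.le
    have hcos : 0 < Real.cos θ := Real.cos_pos_of_mem_Ioo hθ
    have he1 : f θ ^ 2 - r ^ 2 = R * (1 + Real.sin θ) := by
      rw [hfsq]; have : c - R = r ^ 2 := by rw [hc, hR]; ring
      linarith [this]
    have he2 : u ^ 2 - f θ ^ 2 = R * (1 - Real.sin θ) := by
      rw [hfsq]; have : c + R = u ^ 2 := by rw [hc, hR]; ring
      linarith [this]
    have hsqrtprod : Real.sqrt (f θ ^ 2 - r ^ 2) * Real.sqrt (u ^ 2 - f θ ^ 2)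
        = R * Real.cos θ := by
      rw [he1, he2, ← Real.sqrt_mul (by nlinarith [(hsin θ hθ).1])]
      rw [show R * (1 + Real.sin θ) * (R * (1 - Real.sin θ)) = (R * Real.cos θ) ^ 2 by
        linear_combination (-(((u:ℝ) ^ 2 - r ^ 2) / 2) ^ 2) * Real.sin_sq_add_cos_sq θ]
      exact Real.sqrt_sq (by positivity)
    have hfpos : 0 < f θ := lt_trans hr (hmem θ hθ).1
    rw [hsqrtprod, abs_of_pos (by positivity)]
    rw [← ENNReal.ofReal_mul (by positivity)]
    congr 1
    have hfθ : f θ = Real.sqrt (c + R * Real.sin θ) := rfl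
    rw [← hfθ]
    field_simp
  rw [setLIntegral_congr_fun measurableSet_Ioo key]
  rw [setLIntegral_const, Real.volume_Ioo]
  rw [show π / 2 - -(π / 2) = π by ring, ← ENNReal.ofReal_mul (by norm_num)]
  congr 1
  ring

theorem core_fubini {r : ℝ} (hr : 0 < r) {g : ℝ → ℝ≥0∞} (hg : Measurable g) :
    ∫⁻ s in Ioi (0:ℝ), ENNReal.ofReal (r * Real.cosh s) *
        ∫⁻ t in Ioi (0:ℝ), g (r * Real.cosh s * Real.cosh t)
      = ENNReal.ofReal (π / 2) * ∫⁻ u in Ioi r, g u := by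
  classical
  set B : ℝ → ℝ → ℝ≥0∞ := fun w u => g u * ENNReal.ofReal (1 / Real.sqrt (u ^ 2 - w ^ 2))
    with hB
  have hBmeas : Measurable (fun p : ℝ × ℝ => B p.1 p.2) := by
    apply Measurable.mul (hg.comp measurable_snd)
    apply Measurable.ennreal_ofReal
    exact measurable_const.div
      (Real.continuous_sqrt.measurable.comp ((continuous_pow 2).comp continuous_snd |>.sub
        ((continuous_pow 2).comp continuous_fst)).measurable)
  set F : ℝ → ℝ → ℝ≥0∞ := fun w u => if w < u then B w u else 0 with hF
  have hFmeas : Measurable (fun p : ℝ × ℝ => F p.1 p.2) := by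
    have : (fun p : ℝ × ℝ => F p.1 p.2)
        = Set.indicator {p : ℝ × ℝ | p.1 < p.2} (fun p => B p.1 p.2) := by
      funext p
      rw [hF, Set.indicator_apply]
      rfl
    rw [this]
    exact hBmeas.indicator (measurableSet_lt measurable_fst measurable_snd)
  set H : ℝ → ℝ≥0∞ := fun w => ∫⁻ u in Ioi w, B w u with hH
  have hHF : ∀ w, H w = ∫⁻ u, F w u := by
    intro w
    rw [hH]
    simp only []
    rw [← lintegral_indicator measurableSet_Ioi]
    exact lintegral_congr fun u => by
      rw [Set.indicator_apply, hF]
      simp [Set.mem_Ioi]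
  have hHmeas : Measurable H := by
    have : H = fun w => ∫⁻ u, F w u := funext hHF
    rw [this]
    exact Measurable.lintegral_prod_right' (f := fun p : ℝ × ℝ => F p.1 p.2) hFmeas
  have step1 : ∀ s : ℝ, 0 < s →
      (∫⁻ t in Ioi (0:ℝ), g (r * Real.cosh s * Real.cosh t)) = H (r * Real.cosh s) := by
    intro s _
    have hρ : 0 < r * Real.cosh s := by positivity
    rw [hH]
    exact (subst_cosh hρ g).symm
  rw [setLIntegral_congr_fun measurableSet_Ioi
    (fun ⦃s⦄ hs => by rw [step1 s hs])]
  have step2 : ∫⁻ w in Ioi r, (ENNReal.ofReal w * H w) * ENNReal.ofReal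
      (1 / Real.sqrt (w ^ 2 - r ^ 2)) = ∫⁻ s in Ioi (0:ℝ),
      ENNReal.ofReal (r * Real.cosh s) * H (r * Real.cosh s) :=
    subst_cosh hr (fun w => ENNReal.ofReal w * H w)
  rw [← step2]
  set A : ℝ → ℝ≥0∞ := fun w => ENNReal.ofReal w *
    ENNReal.ofReal (1 / Real.sqrt (w ^ 2 - r ^ 2)) with hA
  have hAmeas : Measurable A := by
    apply Measurable.mul measurable_id'.ennreal_ofReal
    apply Measurable.ennreal_ofReal
    exact measurable_const.div
      (Real.continuous_sqrt.measurable.comp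
        (((continuous_pow 2).sub continuous_const).measurable))
  set Φ : ℝ → ℝ → ℝ≥0∞ := fun w u => (if r < w then A w else 0) * F w u with hΦ
  have key3 : ∫⁻ w in Ioi r, (ENNReal.ofReal w * H w) * ENNReal.ofReal
      (1 / Real.sqrt (w ^ 2 - r ^ 2)) = ∫⁻ w, ∫⁻ u, Φ w u := by
    rw [← lintegral_indicator measurableSet_Ioi]
    apply lintegral_congr
    intro w
    rw [Set.indicator_apply]
    by_cases h : w ∈ Ioi r
    · rw [if_pos h]
      have : ∀ u, Φ w u = A w * F w u := by
        intro u
        rw [hΦ]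
        simp only []
        rw [if_pos (by exact h)]
      have hFw : Measurable (F w) := by
        have : F w = fun u => (fun p : ℝ × ℝ => F p.1 p.2) (w, u) := rfl
        rw [this]
        exact hFmeas.comp measurable_prodMk_left
      rw [lintegral_congr this, lintegral_const_mul _ hFw, ← hHF w, hA]
      simp only []
      ring
    · rw [if_neg h]
      have : ∀ u, Φ w u = 0 := by
        intro u
        rw [hΦ]
        simp only []
        rw [if_neg (by exact h), zero_mul]
      rw [lintegral_congr this, lintegral_zero]
  rw [key3]
  have hΦmeas : AEMeasurable (fun p : ℝ × ℝ => Φ p.1 p.2) ((volume : Measure ℝ).prod volume) := by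
    apply Measurable.aemeasurable
    have : (fun p : ℝ × ℝ => Φ p.1 p.2) = fun p : ℝ × ℝ =>
        (Set.indicator (Ioi r) A p.1) * F p.1 p.2 := by
      funext p
      rw [hΦ, Set.indicator_apply]
      rfl
    rw [this]
    exact ((hAmeas.indicator measurableSet_Ioi).comp measurable_fst).mul hFmeas
  rw [lintegral_lintegral_swap hΦmeas]
  have step4 : ∀ u : ℝ, ∫⁻ w, Φ w u
      = Set.indicator (Ioi r) (fun u => g u * ENNReal.ofReal (π / 2)) u := by
    intro u
    have hpoint : ∀ w, Φ w u = Set.indicator (Ioo r u) (fun w => A w * B w u) w := by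
      intro w
      rw [hΦ, Set.indicator_apply, hF]
      simp only [Set.mem_Ioo]
      by_cases h1 : r < w <;> by_cases h2 : w < u <;> simp [h1, h2]
    rw [lintegral_congr hpoint, lintegral_indicator measurableSet_Ioo _, Set.indicator_apply]
    by_cases hu : u ∈ Ioi r
    · rw [if_pos hu]
      have hcongr : ∀ w ∈ Ioo r u, A w * B w u
          = g u * ENNReal.ofReal (w / (Real.sqrt (w ^ 2 - r ^ 2) * Real.sqrt (u ^ 2 - w ^ 2))) := by
        intro w hw
        have hw0 : 0 < w := lt_trans hr hw.1
        have h1 : 0 < Real.sqrt (w ^ 2 - r ^ 2) := Real.sqrt_pos.2 (by nlinarith [hw.1])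
        have h2 : 0 < Real.sqrt (u ^ 2 - w ^ 2) := Real.sqrt_pos.2 (by nlinarith [hw.2, hw0])
        rw [hA, hB]
        simp only []
        rw [show (ENNReal.ofReal w * ENNReal.ofReal (1 / Real.sqrt (w ^ 2 - r ^ 2))) *
            (g u * ENNReal.ofReal (1 / Real.sqrt (u ^ 2 - w ^ 2)))
          = g u * ((ENNReal.ofReal w * ENNReal.ofReal (1 / Real.sqrt (w ^ 2 - r ^ 2))) *
            ENNReal.ofReal (1 / Real.sqrt (u ^ 2 - w ^ 2))) from by ring]
        congr 1
        rw [← ENNReal.ofReal_mul (by positivity), ← ENNReal.ofReal_mul (by positivity)]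
        congr 1
        field_simp
      rw [setLIntegral_congr_fun measurableSet_Ioo hcongr]
      rw [lintegral_const_mul _ (by
        apply Measurable.ennreal_ofReal
        apply Measurable.div measurable_id'
        exact ((Real.continuous_sqrt.comp ((continuous_pow 2).sub continuous_const)).mul
          ((Real.continuous_sqrt.comp (continuous_const.sub (continuous_pow 2))))).measurable)]
      rw [beta_lintegral hr hu]
    · rw [if_neg hu]
      rw [Set.Ioo_eq_empty (by simpa [Set.mem_Ioi] using hu)]
      simp
  rw [lintegral_congr step4, lintegral_indicator measurableSet_Ioi _]
  rw [lintegral_mul_const _ hg, mul_comm]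

/-- integrable domination by `M e^{-m cosh t}` on `Ioi 0`. -/
theorem integrableOn_exp_neg_cosh {m M : ℝ} (hm : 0 < m) :
    IntegrableOn (fun t => M * Real.exp (-(m * Real.cosh t))) (Ioi 0) := by
  apply Integrable.const_mul
  apply Integrable.mono' (exp_neg_integrableOn_Ioi 0 hm)
  · exact ((Real.continuous_exp.comp ((continuous_const.mul Real.continuous_cosh).neg))).aestronglyMeasurable
  · refine (ae_restrict_iff' measurableSet_Ioi).2 (Filter.Eventually.of_forall fun t ht => ?_)
    rw [Real.norm_eq_abs, abs_of_pos (Real.exp_pos _), Real.exp_le_exp]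
    have h1 : t < Real.cosh t := lt_trans (Real.self_lt_sinh_iff.2 ht) (Real.sinh_lt_cosh t)
    nlinarith

theorem integrableOn_D_cosh {J : ℝ → ℝ} {M ρ : ℝ} (hρ : 0 < ρ)
    (hbound : ∀ x : ℝ, 0 < x → |deriv J x| ≤ M * Real.exp (-x)) :
    IntegrableOn (fun t => deriv J (ρ * Real.cosh t)) (Ioi 0) := by
  apply Integrable.mono' (integrableOn_exp_neg_cosh (M := M) hρ)
  · exact ((measurable_deriv J).comp
      ((continuous_const.mul Real.continuous_cosh).measurable)).aestronglyMeasurable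
  · refine (ae_restrict_iff' measurableSet_Ioi).2 (Filter.Eventually.of_forall fun t _ => ?_)
    rw [Real.norm_eq_abs]
    have h1 : 0 < ρ * Real.cosh t := by positivity
    simpa using hbound _ h1

theorem integrableOn_D_Ioi {J : ℝ → ℝ} {M r : ℝ} (hr : 0 < r)
    (hbound : ∀ x : ℝ, 0 < x → |deriv J x| ≤ M * Real.exp (-x)) :
    IntegrableOn (deriv J) (Ioi r) := by
  apply Integrable.mono' ((exp_neg_integrableOn_Ioi r one_pos).const_mul M)
  · exact (measurable_deriv J).aestronglyMeasurable
  · refine (ae_restrict_iff' measurableSet_Ioi).2 (Filter.Eventually.of_forall fun u hu => ?_)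
    rw [Real.norm_eq_abs, neg_one_mul]
    exact hbound u (lt_trans hr hu)

theorem abel_main {J : ℝ → ℝ} {r M : ℝ} (hr : 0 < r)
    (hbound : ∀ x : ℝ, 0 < x → |deriv J x| ≤ M * Real.exp (-x))
    (hJr : J r = - ∫ u in Ioi r, deriv J u) :
    IntegrableOn (fun s => abelA J (r * Real.cosh s)) (Ioi 0) ∧
    ∫ s in Ioi (0:ℝ), abelA J (r * Real.cosh s) = J r := by
  have hM : 0 ≤ M := by
    have := hbound 1 one_pos
    have h2 := abs_nonneg (deriv J 1)
    nlinarith [Real.exp_pos (-(1:ℝ))]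
  set D := deriv J with hD
  have hDm : Measurable D := measurable_deriv J
  set gp : ℝ → ℝ≥0∞ := fun u => ENNReal.ofReal (D u) with hgp
  set gm : ℝ → ℝ≥0∞ := fun u => ENNReal.ofReal (-D u) with hgm
  have hgpm : Measurable gp := hDm.ennreal_ofReal
  have hgmm : Measurable gm := hDm.neg.ennreal_ofReal
  set Ip : ℝ → ℝ≥0∞ := fun s => ∫⁻ t in Ioi 0, gp (r * Real.cosh s * Real.cosh t) with hIp
  set Im : ℝ → ℝ≥0∞ := fun s => ∫⁻ t in Ioi 0, gm (r * Real.cosh s * Real.cosh t) with hIm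
  have hrc : ∀ s : ℝ, 0 < r * Real.cosh s := fun s => by positivity
  -- finiteness of inner integrals
  have hfin : ∀ (g : ℝ → ℝ≥0∞), (∀ u, 0 < u → g u ≤ ENNReal.ofReal (M * Real.exp (-u))) →
      ∀ s : ℝ, (∫⁻ t in Ioi 0, g (r * Real.cosh s * Real.cosh t)) ≠ ⊤ := by
    intro g hg s
    have hb : ∫⁻ t in Ioi 0, g (r * Real.cosh s * Real.cosh t)
        ≤ ∫⁻ t in Ioi 0, ENNReal.ofReal (M * Real.exp (-(r * Real.cosh s * Real.cosh t))) := by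
      apply lintegral_mono_ae
      refine (ae_restrict_iff' measurableSet_Ioi).2 (Filter.Eventually.of_forall fun t _ => ?_)
      have := hg _ (by positivity : 0 < r * Real.cosh s * Real.cosh t)
      simpa using this
    exact ne_of_lt (lt_of_le_of_lt hb (integrableOn_exp_neg_cosh (hrc s)).lintegral_lt_top)
  have hgple : ∀ u, 0 < u → gp u ≤ ENNReal.ofReal (M * Real.exp (-u)) := fun u hu =>
    ENNReal.ofReal_le_ofReal (le_trans (le_abs_self _) (hbound u hu))
  have hgmle : ∀ u, 0 < u → gm u ≤ ENNReal.ofReal (M * Real.exp (-u)) := fun u hu =>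
    ENNReal.ofReal_le_ofReal (le_trans (neg_le_abs _) (hbound u hu))
  have hIpfin : ∀ s, Ip s ≠ ⊤ := hfin gp hgple
  have hImfin : ∀ s, Im s ≠ ⊤ := hfin gm hgmle
  -- measurability of Ip, Im
  have hImeas : ∀ (g : ℝ → ℝ≥0∞), Measurable g →
      Measurable (fun s => ∫⁻ t in Ioi 0, g (r * Real.cosh s * Real.cosh t)) := by
    intro g hg
    apply Measurable.lintegral_prod_right (f := fun (s t : ℝ) => g (r * Real.cosh s * Real.cosh t))
    exact hg.comp (((continuous_const.mul Real.continuous_cosh).comp continuous_fst).mul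
      (Real.continuous_cosh.comp continuous_snd)).measurable
  have hIpm : Measurable Ip := hImeas gp hgpm
  have hImm : Measurable Im := hImeas gm hgmm
  -- the `φ` functions
  set φp : ℝ → ℝ := fun s => r * Real.cosh s * (Ip s).toReal with hφp
  set φm : ℝ → ℝ := fun s => r * Real.cosh s * (Im s).toReal with hφm
  have hφpm : Measurable φp := ((measurable_const.mul Real.continuous_cosh.measurable)).mul
    hIpm.ennreal_toReal
  have hφmm : Measurable φm := ((measurable_const.mul Real.continuous_cosh.measurable)).mul
    hImm.ennreal_toReal
  -- Fubini results
  have hSp : ∫⁻ s in Ioi (0:ℝ), ENNReal.ofReal (r * Real.cosh s) * Ip s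
      = ENNReal.ofReal (π / 2) * ∫⁻ u in Ioi r, gp u := core_fubini hr hgpm
  have hSm : ∫⁻ s in Ioi (0:ℝ), ENNReal.ofReal (r * Real.cosh s) * Im s
      = ENNReal.ofReal (π / 2) * ∫⁻ u in Ioi r, gm u := core_fubini hr hgmm
  -- finiteness over Ioi r
  have hDInt : IntegrableOn D (Ioi r) := integrableOn_D_Ioi hr hbound
  have hgTfin : ∀ (g : ℝ → ℝ≥0∞), (∀ u, 0 < u → g u ≤ ENNReal.ofReal (M * Real.exp (-u))) →
      (∫⁻ u in Ioi r, g u) ≠ ⊤ := by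
    intro g hg
    have hb : ∫⁻ u in Ioi r, g u ≤ ∫⁻ u in Ioi r, ENNReal.ofReal (M * Real.exp (-1 * u)) := by
      apply lintegral_mono_ae
      refine (ae_restrict_iff' measurableSet_Ioi).2 (Filter.Eventually.of_forall fun u hu => ?_)
      rw [neg_one_mul]
      exact hg u (lt_trans hr hu)
    exact ne_of_lt (lt_of_le_of_lt hb
      ((exp_neg_integrableOn_Ioi r one_pos).const_mul M).lintegral_lt_top)
  have hgpT : (∫⁻ u in Ioi r, gp u) ≠ ⊤ := hgTfin gp hgple
  have hgmT : (∫⁻ u in Ioi r, gm u) ≠ ⊤ := hgTfin gm hgmle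
  -- integrability of φp, φm
  have hφInt : ∀ (I : ℝ → ℝ≥0∞), Measurable I → (∀ s, I s ≠ ⊤) →
      (∫⁻ s in Ioi (0:ℝ), ENNReal.ofReal (r * Real.cosh s) * I s) ≠ ⊤ →
      IntegrableOn (fun s => r * Real.cosh s * (I s).toReal) (Ioi 0) ∧
      ∫ s in Ioi (0:ℝ), r * Real.cosh s * (I s).toReal
        = (∫⁻ s in Ioi (0:ℝ), ENNReal.ofReal (r * Real.cosh s) * I s).toReal := by
    intro I hI hIfin hSfin
    have hmeas : Measurable fun s => r * Real.cosh s * (I s).toReal :=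
      (measurable_const.mul Real.continuous_cosh.measurable).mul hI.ennreal_toReal
    have hofReal : ∀ s : ℝ, ENNReal.ofReal (r * Real.cosh s * (I s).toReal)
        = ENNReal.ofReal (r * Real.cosh s) * I s := by
      intro s
      rw [ENNReal.ofReal_mul (le_of_lt (hrc s)), ENNReal.ofReal_toReal (hIfin s)]
    have hnn : ∀ s : ℝ, 0 ≤ r * Real.cosh s * (I s).toReal := fun s => by
      have := (hrc s).le
      positivity
    constructor
    · constructor
      · exact hmeas.aestronglyMeasurable
      · rw [hasFiniteIntegral_iff_norm]
        have : ∀ s : ℝ, ENNReal.ofReal ‖r * Real.cosh s * (I s).toReal‖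
            = ENNReal.ofReal (r * Real.cosh s) * I s := by
          intro s
          rw [Real.norm_eq_abs, abs_of_nonneg (hnn s), hofReal s]
        rw [lintegral_congr fun s => this s]
        exact lt_of_le_of_ne le_top hSfin
    · rw [integral_eq_lintegral_of_nonneg_ae (Filter.Eventually.of_forall hnn)
        hmeas.aestronglyMeasurable]
      congr 1
      exact lintegral_congr fun s => hofReal s
  have hSpfin : (∫⁻ s in Ioi (0:ℝ), ENNReal.ofReal (r * Real.cosh s) * Ip s) ≠ ⊤ := by
    rw [hSp]; exact ENNReal.mul_ne_top ENNReal.ofReal_ne_top hgpT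
  have hSmfin : (∫⁻ s in Ioi (0:ℝ), ENNReal.ofReal (r * Real.cosh s) * Im s) ≠ ⊤ := by
    rw [hSm]; exact ENNReal.mul_ne_top ENNReal.ofReal_ne_top hgmT
  obtain ⟨hφpInt, hφpVal⟩ := hφInt Ip hIpm hIpfin hSpfin
  obtain ⟨hφmInt, hφmVal⟩ := hφInt Im hImm hImfin hSmfin
  -- pointwise identity for abelA
  have hpoint : ∀ s : ℝ, abelA J (r * Real.cosh s) = -(2 / π) * (φp s - φm s) := by
    intro s
    have hInt : IntegrableOn (fun t => D ((r * Real.cosh s) * Real.cosh t)) (Ioi 0) :=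
      integrableOn_D_cosh (hrc s) hbound
    have : (∫ t in Ioi (0:ℝ), D (r * Real.cosh s * Real.cosh t))
        = (Ip s).toReal - (Im s).toReal := by
      rw [integral_eq_lintegral_pos_part_sub_lintegral_neg_part hInt]
    rw [abelA, this]
    rw [hφp, hφm]
    simp only []
    ring
  have hfuneq : (fun s => abelA J (r * Real.cosh s)) = fun s => -(2 / π) * (φp s - φm s) :=
    funext hpoint
  constructor
  · rw [hfuneq]
    exact ((hφpInt.sub hφmInt).const_mul _)
  · rw [hfuneq, integral_const_mul, integral_sub hφpInt hφmInt, hφpVal, hφmVal, hSp, hSm]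
    rw [ENNReal.toReal_mul, ENNReal.toReal_mul, ENNReal.toReal_ofReal (by positivity : (0:ℝ) ≤ π/2)]
    have hDval : ∫ u in Ioi r, D u
        = (∫⁻ u in Ioi r, gp u).toReal - (∫⁻ u in Ioi r, gm u).toReal :=
      integral_eq_lintegral_pos_part_sub_lintegral_neg_part hDInt
    rw [hJr, hDval]
    have hπ : (π : ℝ) ≠ 0 := ne_of_gt Real.pi_pos
    field_simp

theorem J_tendsto_and_eq {J : ℝ → ℝ} {M : ℝ}
    (hdiff : ∀ x : ℝ, 0 < x → DifferentiableAt ℝ J x)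
    (hcont : ContinuousOn (deriv J) (Ioi 0))
    (hbound : ∀ x : ℝ, 0 < x → |deriv J x| ≤ M * Real.exp (-x))
    (hlim : Tendsto J atTop (nhds 0)) {r : ℝ} (hr : 0 < r) :
    J r = - ∫ u in Ioi r, deriv J u := by
  have hInt : IntegrableOn (deriv J) (Ioi r) := integrableOn_D_Ioi hr hbound
  have h1 : Tendsto (fun b => ∫ u in r..b, deriv J u) atTop
      (nhds (∫ u in Ioi r, deriv J u)) :=
    intervalIntegral_tendsto_integral_Ioi r hInt tendsto_id
  have h2 : ∀ᶠ b in atTop, ∫ u in r..b, deriv J u = J b - J r := by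
    filter_upwards [eventually_ge_atTop r] with b hb
    apply intervalIntegral.integral_deriv_eq_sub
    · intro x hx
      rw [uIcc_of_le hb] at hx
      exact hdiff x (lt_of_lt_of_le hr hx.1)
    · apply ContinuousOn.intervalIntegrable
      apply hcont.mono
      rw [uIcc_of_le hb]
      intro x hx
      exact lt_of_lt_of_le hr hx.1
  have h3 : Tendsto (fun b => J b - J r) atTop (nhds (0 - J r)) :=
    hlim.sub_const (J r)
  have h4 : Tendsto (fun b => ∫ u in r..b, deriv J u) atTop (nhds (0 - J r)) :=
    h3.congr' (by filter_upwards [h2] with b hb using hb.symm)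
  have := tendsto_nhds_unique h1 h4
  linarith [this]

/-- the exponential decay bound on `deriv J`. -/
theorem derivJ_bound {J : ℝ → ℝ} {a L : ℝ} (ha : 0 < a)
    (hJc : ContDiffOn ℝ 1 J (Ici 0))
    (hL : Tendsto (fun r => r ^ a * Real.exp r * deriv J r) atTop (nhds L)) :
    ∃ M : ℝ, ∀ x : ℝ, 0 < x → |deriv J x| ≤ M * Real.exp (-x) := by
  have hev : ∀ᶠ ρ in atTop, dist (ρ ^ a * Real.exp ρ * deriv J ρ) L < 1 :=
    hL.eventually (Metric.ball_mem_nhds L one_pos)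
  obtain ⟨ρ₀, hρ₀⟩ := eventually_atTop.1 (hev.and (eventually_ge_atTop 1))
  set ρ₁ : ℝ := max ρ₀ 1 with hρ₁def
  have hρ₁one : (1:ℝ) ≤ ρ₁ := le_max_right _ _
  have htail : ∀ x : ℝ, ρ₁ ≤ x → |deriv J x| ≤ (|L| + 1) * Real.exp (-x) := by
    intro x hx
    have hx1 : (1:ℝ) ≤ x := le_trans hρ₁one hx
    have hx0 : (0:ℝ) < x := lt_of_lt_of_le one_pos hx1
    obtain ⟨hd, -⟩ := hρ₀ x (le_trans (le_max_left _ _) hx)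
    rw [Real.dist_eq] at hd
    have habs : |x ^ a * Real.exp x * deriv J x| ≤ |L| + 1 := by
      have := abs_sub_abs_le_abs_sub (x ^ a * Real.exp x * deriv J x) L
      linarith [le_of_lt hd]
    have hxa : (1:ℝ) ≤ x ^ a := by
      have := Real.rpow_le_rpow (zero_le_one) hx1 ha.le
      rwa [Real.one_rpow] at this
    have h1 : x ^ a * Real.exp x * |deriv J x| ≤ |L| + 1 := by
      rw [← abs_of_pos (show (0:ℝ) < x ^ a * Real.exp x by positivity), ← abs_mul]
      exact habs
    have h2 : Real.exp x * |deriv J x| ≤ |L| + 1 := by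
      nlinarith [mul_nonneg (mul_nonneg (sub_nonneg.2 hxa) (Real.exp_pos x).le)
        (abs_nonneg (deriv J x))]
    have h3 := mul_le_mul_of_nonneg_right h2 (le_of_lt (Real.exp_pos (-x)))
    rw [mul_comm (Real.exp x) _, mul_assoc, ← Real.exp_add] at h3
    simpa using h3
  -- compact part
  have hcontW : ContinuousOn (derivWithin J (Ici 0)) (Icc 0 ρ₁) :=
    (hJc.continuousOn_derivWithin (uniqueDiffOn_Ici 0) le_rfl).mono (fun x hx => hx.1)
  obtain ⟨C, hC⟩ := (isCompact_Icc).exists_bound_of_continuousOn hcontW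
  have hC0 : 0 ≤ C := le_trans (norm_nonneg _) (hC 0 ⟨le_rfl, by linarith⟩)
  refine ⟨max (|L| + 1) (C * Real.exp ρ₁), fun x hx => ?_⟩
  rcases le_or_gt x ρ₁ with hcase | hcase
  · have heq : deriv J x = derivWithin J (Ici 0) x :=
      (derivWithin_of_mem_nhds (Ici_mem_nhds hx)).symm
    have h1 : |deriv J x| ≤ C := by
      rw [heq, ← Real.norm_eq_abs]
      exact hC x ⟨hx.le, hcase⟩
    have h2 : (1:ℝ) ≤ Real.exp ρ₁ * Real.exp (-x) := by
      rw [← Real.exp_add]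
      exact Real.one_le_exp (by linarith)
    calc |deriv J x| ≤ C := h1
      _ ≤ C * (Real.exp ρ₁ * Real.exp (-x)) := by nlinarith
      _ = C * Real.exp ρ₁ * Real.exp (-x) := by ring
      _ ≤ max (|L| + 1) (C * Real.exp ρ₁) * Real.exp (-x) := by
          have := le_max_right (|L| + 1) (C * Real.exp ρ₁)
          nlinarith [Real.exp_pos (-x)]
  · have := htail x hcase.le
    have h2 := le_max_left (|L| + 1) (C * Real.exp ρ₁)
    nlinarith [Real.exp_pos (-x)]


theorem J_tendsto_zero {K : Eu 2 → ℝ} {J : ℝ → ℝ} {M : ℝ} (hK1 : Integrable K volume)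
    (hKJ : ∀ x : Eu 2, K x = J ‖x‖)
    (hdiff : ∀ x : ℝ, 0 < x → DifferentiableAt ℝ J x)
    (hcont : ContinuousOn (deriv J) (Ioi 0))
    (hbound : ∀ x : ℝ, 0 < x → |deriv J x| ≤ M * Real.exp (-x)) :
    Tendsto J atTop (nhds 0) := by
  have hInt : IntegrableOn (deriv J) (Ioi 1) := integrableOn_D_Ioi one_pos hbound
  set ℓ : ℝ := J 1 + ∫ u in Ioi 1, deriv J u with hℓ
  have hlim : Tendsto J atTop (nhds ℓ) := by
    have h1 : Tendsto (fun b => J 1 + ∫ u in (1:ℝ)..b, deriv J u) atTop (nhds ℓ) :=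
      (intervalIntegral_tendsto_integral_Ioi 1 hInt tendsto_id).const_add (J 1)
    apply h1.congr'
    filter_upwards [eventually_ge_atTop (1:ℝ)] with b hb
    have : ∫ u in (1:ℝ)..b, deriv J u = J b - J 1 := by
      apply intervalIntegral.integral_deriv_eq_sub
      · intro y hy
        rw [uIcc_of_le hb] at hy
        exact hdiff y (lt_of_lt_of_le one_pos hy.1)
      · apply ContinuousOn.intervalIntegrable
        apply hcont.mono
        rw [uIcc_of_le hb]
        exact fun y hy => lt_of_lt_of_le one_pos hy.1
    rw [this]
    ring
  have hℓ0 : ℓ = 0 := by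
    by_contra hne
    set c : ℝ := |ℓ| / 2 with hcdef
    have hc : 0 < c := by
      have : 0 < |ℓ| := abs_pos.2 hne
      rw [hcdef]; linarith
    have hev : ∀ᶠ b in atTop, c ≤ |J b| := by
      filter_upwards [hlim.eventually (Metric.ball_mem_nhds ℓ hc)] with b hb
      rw [Real.dist_eq] at hb
      have := abs_sub_abs_le_abs_sub ℓ (J b)
      rw [abs_sub_comm] at hb
      have h2 : |ℓ| - |J b| < c := lt_of_le_of_lt this hb
      rw [hcdef] at *
      linarith
    obtain ⟨R, hR⟩ := eventually_atTop.1 hev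
    have hsub : {x : Eu 2 | max R 0 ≤ ‖x‖} ⊆ {x : Eu 2 | c ≤ ‖K x‖} := by
      intro x hx
      have : c ≤ |J ‖x‖| := hR _ (le_trans (le_max_left _ _) hx)
      simpa [hKJ x, Real.norm_eq_abs] using this
    have hfin : volume {x : Eu 2 | c ≤ ‖K x‖} < ⊤ := hK1.measure_norm_ge_lt_top hc
    have hBig : volume {x : Eu 2 | max R 0 ≤ ‖x‖} = ⊤ := by
      have hcompl : {x : Eu 2 | max R 0 ≤ ‖x‖} = (Metric.ball (0 : Eu 2) (max R 0))ᶜ := by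
        ext y
        simp [Metric.mem_ball, dist_zero_right, not_lt, Set.mem_setOf_eq]
      rw [hcompl]
      by_contra hlt
      have h1 : volume (Metric.ball (0 : Eu 2) (max R 0)) < ⊤ := measure_ball_lt_top
      have h2 : volume (univ : Set (Eu 2)) < ⊤ := by
        rw [← Set.union_compl_self (Metric.ball (0 : Eu 2) (max R 0))]
        exact lt_of_le_of_lt (measure_union_le _ _)
          (ENNReal.add_lt_top.2 ⟨h1, lt_top_iff_ne_top.2 hlt⟩)
      rw [measure_univ_of_isAddLeftInvariant] at h2
      exact absurd h2 (lt_irrefl _)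
    have hle := measure_mono (μ := (volume : Measure (Eu 2))) hsub
    rw [hBig] at hle
    exact absurd (lt_of_le_of_lt hle hfin) (lt_irrefl _)
  rw [← hℓ0]
  exact hlim

/-- Two-dimensional pointwise kernel-approximation estimate:
`|K(x) - K_{N+1}(x)| ≤ M₀(|x|) · max_{λ∈[0,1]} |h(λ) - P_N(λ)|` for `x ≠ 0`. -/
theorem statement9 (K : Eu 2 → ℝ) (J : ℝ → ℝ) (a L : ℝ) (ha : 1 / 2 < a)
    (hK1 : Integrable K volume) (hKJ : ∀ x : Eu 2, K x = J ‖x‖)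
    (hJc : ContDiffOn ℝ 1 J (Ici 0))
    (hL : Tendsto (fun r => r ^ a * Real.exp r * deriv J r) atTop (nhds L))
    (N : ℕ) (α : Fin (N + 1) → ℝ) (C : ℝ)
    (hC : ∀ lam ∈ Icc (0:ℝ) 1,
      |(if lam = 0 then 0 else abelA J (-Real.log lam) / lam)
        - ∑ j : Fin (N + 1), α j * (((j : ℝ) + 1) ^ 2 / (2 * π)) * lam ^ (j : ℕ)| ≤ C) :
    ∀ x : Eu 2, x ≠ 0 →
      |K x - ∑ j : Fin (N + 1),
          α j * (((j : ℝ) + 1) ^ 2 / (2 * π)) * besselM 0 (((j : ℝ) + 1) * ‖x‖)|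
        ≤ besselM 0 ‖x‖ * C := by
  intro x hx
  have hdiff : ∀ y : ℝ, 0 < y → DifferentiableAt ℝ J y := fun y hy =>
    ((hJc.differentiableOn one_ne_zero).differentiableAt (Ici_mem_nhds hy))
  have hcont : ContinuousOn (deriv J) (Ioi 0) := by
    apply ((hJc.continuousOn_derivWithin (uniqueDiffOn_Ici 0) le_rfl).mono
      (fun y (hy : y ∈ Ioi 0) => le_of_lt hy)).congr
    intro y hy
    exact (derivWithin_of_mem_nhds (Ici_mem_nhds hy)).symm
  obtain ⟨M, hbound⟩ := derivJ_bound (by linarith : (0:ℝ) < a) hJc hL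
  have hlim := J_tendsto_zero hK1 hKJ hdiff hcont hbound
  set r : ℝ := ‖x‖ with hrdef
  have hr : 0 < r := by rw [hrdef]; exact norm_pos_iff.2 hx
  have hJr := J_tendsto_and_eq hdiff hcont hbound hlim hr
  obtain ⟨hAInt, hAval⟩ := abel_main hr hbound hJr
  have hbessel : ∀ m : ℝ, besselM 0 m = ∫ s in Ioi (0:ℝ), Real.exp (-(m * Real.cosh s)) := by
    intro m
    rw [besselM]
    congr 1
    funext s
    rw [zero_mul, Real.cosh_zero, mul_one, neg_mul]
  set lam : ℝ → ℝ := fun s => Real.exp (-(r * Real.cosh s)) with hlam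
  have hlam_pos : ∀ s, 0 < lam s := fun s => Real.exp_pos _
  have hlam_mem : ∀ s : ℝ, lam s ∈ Icc (0:ℝ) 1 := by
    intro s
    refine ⟨(hlam_pos s).le, Real.exp_le_one_iff.2 ?_⟩
    have h1 : 0 < Real.cosh s := Real.cosh_pos s
    nlinarith
  have hlam_ne : ∀ s, lam s ≠ 0 := fun s => (hlam_pos s).ne'
  set c : Fin (N + 1) → ℝ := fun j => ((j : ℝ) + 1) ^ 2 / (2 * π) with hc'
  set P : ℝ → ℝ := fun l => ∑ j : Fin (N + 1), α j * c j * l ^ (j : ℕ) with hP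
  have hptbound : ∀ s : ℝ,
      |abelA J (r * Real.cosh s) - lam s * P (lam s)| ≤ C * lam s := by
    intro s
    have hlog : -Real.log (lam s) = r * Real.cosh s := by
      rw [hlam]
      simp [Real.log_exp]
    have hCs := hC (lam s) (hlam_mem s)
    rw [if_neg (hlam_ne s), hlog] at hCs
    have key : abelA J (r * Real.cosh s) - lam s * P (lam s)
        = lam s * (abelA J (r * Real.cosh s) / lam s - P (lam s)) := by
      rw [mul_sub, mul_div_assoc', mul_div_cancel_left₀ _ (hlam_ne s)]
    rw [key, abs_mul, abs_of_pos (hlam_pos s), mul_comm C (lam s)]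
    exact mul_le_mul_of_nonneg_left hCs (hlam_pos s).le
  -- integrability of each sum term
  have hsum_int : ∀ j : Fin (N + 1), IntegrableOn
      (fun s => α j * c j * Real.exp (-((((j : ℝ) + 1) * r) * Real.cosh s))) (Ioi 0) := by
    intro j
    have hm : 0 < ((j : ℝ) + 1) * r := by positivity
    exact integrableOn_exp_neg_cosh (M := α j * c j) hm
  -- pointwise identity for each term
  have hterm : ∀ (j : Fin (N + 1)) (s : ℝ),
      α j * c j * Real.exp (-((((j : ℝ) + 1) * r) * Real.cosh s))
        = lam s * (α j * c j * lam s ^ (j : ℕ)) := by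
    intro j s
    have : Real.exp (-((((j : ℝ) + 1) * r) * Real.cosh s))
        = lam s ^ ((j : ℕ) + 1) := by
      rw [hlam]
      simp only []
      rw [← Real.exp_nat_mul]
      congr 1
      push_cast
      ring
    rw [this, pow_succ, hlam]
    ring
  have hQint : IntegrableOn (fun s => lam s * P (lam s)) (Ioi 0) := by
    have heq : (fun s => lam s * P (lam s))
        = fun s => ∑ j : Fin (N + 1), α j * c j * Real.exp (-((((j : ℝ) + 1) * r) * Real.cosh s)) := by
      funext s
      rw [hP, Finset.mul_sum]
      exact (Finset.sum_congr rfl fun j _ => (hterm j s)).symm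
    rw [heq]
    exact integrable_finset_sum _ (fun j _ => hsum_int j)
  have hsum_val : ∑ j : Fin (N + 1), α j * c j * besselM 0 (((j : ℝ) + 1) * r)
      = ∫ s in Ioi (0:ℝ), lam s * P (lam s) := by
    have h1 : ∀ j : Fin (N + 1), α j * c j * besselM 0 (((j : ℝ) + 1) * r)
        = ∫ s in Ioi (0:ℝ), α j * c j * Real.exp (-((((j : ℝ) + 1) * r) * Real.cosh s)) := by
      intro j
      rw [hbessel, integral_const_mul]
    rw [Finset.sum_congr rfl fun j _ => h1 j, ← integral_finset_sum _ (fun j _ => hsum_int j)]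
    congr 1
    funext s
    rw [Finset.sum_congr rfl fun j _ => hterm j s, ← Finset.mul_sum, hP]
  -- final estimate
  have hKx : K x = J r := hKJ x
  have hgoal : K x - ∑ j : Fin (N + 1), α j * c j * besselM 0 (((j : ℝ) + 1) * r)
      = ∫ s in Ioi (0:ℝ), (abelA J (r * Real.cosh s) - lam s * P (lam s)) := by
    rw [integral_sub hAInt hQint, hKx, ← hAval, hsum_val]
  rw [hgoal]
  have hgint : Integrable (fun s => C * lam s) (volume.restrict (Ioi 0)) :=
    integrableOn_exp_neg_cosh (M := C) hr
  have hle : |∫ s in Ioi (0:ℝ), (abelA J (r * Real.cosh s) - lam s * P (lam s))|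
      ≤ ∫ s in Ioi (0:ℝ), C * lam s := by
    rw [← Real.norm_eq_abs]
    apply norm_integral_le_of_norm_le hgint
    refine Filter.Eventually.of_forall fun s => ?_
    rw [Real.norm_eq_abs]
    exact hptbound s
  have hval : ∫ s in Ioi (0:ℝ), C * lam s = besselM 0 r * C := by
    rw [integral_const_mul, ← hbessel r, mul_comm]
  rw [hval] at hle
  exact hle
end
end

section
/- Let n = 3 and d_j = j^{−2} for j ∈ ℕ. Suppose K ∈ L¹(ℝ³) is radial with K(x) = J(|x|), J ∈ C((0,∞)), and both limits lim_{r→0} r J(r) and lim_{r→∞} r e^r J(r) exist; set h(λ) := −(log λ) J(−log λ)/λ for λ ∈ (0,1), h(0) := lim_{r→∞} r e^r J(r), h(1) := lim_{r→0} r J(r). Then for any N ∈ ℕ, any real α₁, …, α_{N+1}, and every x ∈ ℝ³ \ {0}, |K(x) − K_{N+1}(x)| ≤ (e^{−|x|}/|x|) · max_{λ∈[0,1]} |h(λ) − P_N(λ)|, where P_N(λ) := Σ_{j=0}^N α_{j+1} ((j+1)²/(4π)) λ^j and K_{N+1} := Σ_{j=1}^{N+1} α_j k_j. -/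
open MeasureTheory Real Set Filter
open scoped ENNReal NNReal

noncomputable section

/-- Three-dimensional pointwise kernel-approximation estimate:
`|K(x) - K_{N+1}(x)| ≤ (e^{-|x|}/|x|) · max_{λ∈[0,1]} |h(λ) - P_N(λ)|` for `x ≠ 0`. -/
theorem statement10 (K : Eu 3 → ℝ) (J : ℝ → ℝ) (L₀ Li : ℝ)
    (hK1 : Integrable K volume) (hKJ : ∀ x : Eu 3, x ≠ 0 → K x = J ‖x‖)
    (hJc : ContinuousOn J (Ioi 0))
    (hL₀ : Tendsto (fun r => r * J r) (nhdsWithin 0 (Ioi 0)) (nhds L₀))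
    (hLi : Tendsto (fun r => r * Real.exp r * J r) atTop (nhds Li))
    (N : ℕ) (α : Fin (N + 1) → ℝ) (C : ℝ)
    (hC : ∀ lam ∈ Icc (0:ℝ) 1,
      |(if lam = 0 then Li else if lam = 1 then L₀ else
          -Real.log lam * J (-Real.log lam) / lam)
        - ∑ j : Fin (N + 1), α j * (((j : ℝ) + 1) ^ 2 / (4 * π)) * lam ^ (j : ℕ)| ≤ C) :
    ∀ x : Eu 3, x ≠ 0 →
      |K x - ∑ j : Fin (N + 1),
          α j * (((j : ℝ) + 1) ^ 2 / (4 * π * ‖x‖)) * Real.exp (-((j : ℝ) + 1) * ‖x‖)|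
        ≤ Real.exp (-‖x‖) / ‖x‖ * C := by
  intro x hx
  have hr : 0 < ‖x‖ := norm_pos_iff.mpr hx
  set r := ‖x‖ with hrdef
  have hlam0 : (0:ℝ) < Real.exp (-r) := Real.exp_pos _
  have hlam1 : Real.exp (-r) < 1 := Real.exp_lt_one_iff.mpr (by linarith)
  have h1 := hC (Real.exp (-r)) ⟨hlam0.le, hlam1.le⟩
  rw [if_neg hlam0.ne', if_neg hlam1.ne, Real.log_exp, neg_neg] at h1
  have key : K x - ∑ j : Fin (N + 1),
      α j * (((j : ℝ) + 1) ^ 2 / (4 * π * r)) * Real.exp (-((j : ℝ) + 1) * r)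
      = Real.exp (-r) / r * ((r * J r / Real.exp (-r))
        - ∑ j : Fin (N + 1), α j * (((j : ℝ) + 1) ^ 2 / (4 * π)) * Real.exp (-r) ^ (j : ℕ)) := by
    rw [hKJ x hx, mul_sub]
    congr 1
    · field_simp
      rw [← hrdef]
    · rw [Finset.mul_sum]
      refine Finset.sum_congr rfl fun j _ => ?_
      rw [← Real.exp_nat_mul]
      have : Real.exp (-r) / r * (α j * (((j : ℝ) + 1) ^ 2 / (4 * π)) * Real.exp ((j : ℕ) * -r))
          = α j * (((j : ℝ) + 1) ^ 2 / (4 * π * r)) * (Real.exp (-r) * Real.exp ((j : ℕ) * -r)) := by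
        field_simp
      rw [this, ← Real.exp_add]
      congr 2
      ring
  rw [key, abs_mul, abs_of_pos (by positivity)]
  exact mul_le_mul_of_nonneg_left h1 (by positivity)
end
end

section
/- Let n = 1 and d_j = j^{−2} for j ∈ ℕ. Suppose K ∈ L¹(ℝ) is even with K(x) = J(|x|), J ∈ C¹([0,∞)), and both limits lim_{r→∞} e^{2r} J(r) and lim_{r→∞} e^{2r} J'(r) exist; set h(λ) := J(−log λ)/λ for λ ∈ (0,1] and h(0) := lim_{r→∞} e^r J(r) (so that h'(λ) = −e^{2r}(J'(r) + J(r)) with r = −log λ, and h'(0) := lim_{r→∞} −e^{2r}(J(r) + J'(r))). Then for any N ∈ ℕ and any real α₁, …, α_{N+1}, ‖K − K_{N+1}‖_{W^{1,1}(ℝ)} ≤ 4 · max_{λ∈[0,1]} |h(λ) − P_N(λ)| + max_{λ∈[0,1]} |h'(λ) − P_N'(λ)|, where P_N(λ) := Σ_{j=0}^N α_{j+1} ((j+1)/2) λ^j and K_{N+1} := Σ_{j=1}^{N+1} α_j k_j. -/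
open MeasureTheory Real Set Filter
open scoped ENNReal NNReal

noncomputable section

/-- Auxiliary: `exp (-(a|x|))` is integrable on `ℝ` for `a > 0`. -/
lemma exp_abs_integrable {a : ℝ} (ha : 0 < a) :
    Integrable (fun x : ℝ => Real.exp (-(a * |x|))) := by
  have h1 : IntegrableOn (fun x : ℝ => Real.exp (-(a * |x|))) (Ioi (0:ℝ)) := by
    refine (exp_neg_integrableOn_Ioi 0 ha).congr_fun (fun x hx => ?_) measurableSet_Ioi
    rw [abs_of_pos hx]
    simp only [neg_mul]
  have h2 : IntegrableOn (fun x : ℝ => Real.exp (-(a * |x|))) (Iic (0:ℝ)) := by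
    have m : MeasurableEmbedding fun x : ℝ => -x := (Homeomorph.neg ℝ).measurableEmbedding
    rw [IntegrableOn, ← Measure.map_neg_eq_self (volume : Measure ℝ)]
    show IntegrableOn (fun x : ℝ => Real.exp (-(a * |x|))) (Iic 0)
      (Measure.map (fun x : ℝ => -x) volume)
    rw [m.integrableOn_map_iff]
    simp only [Function.comp_def, abs_neg, neg_preimage, neg_Iic, neg_zero]
    exact Iff.mpr integrableOn_Ici_iff_integrableOn_Ioi h1
  have h := h2.union h1
  rwa [Iic_union_Ioi, integrableOn_univ] at h

/-- Auxiliary: `∫ exp (-(a|x|)) = 2/a` for `a > 0`. -/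
lemma exp_abs_integral {a : ℝ} (ha : 0 < a) :
    (∫ x : ℝ, Real.exp (-(a * |x|))) = 2 / a := by
  have h := integral_comp_abs (f := fun x : ℝ => Real.exp (-(a * x)))
  rw [h]
  have h2 : (∫ x in Ioi (0:ℝ), Real.exp (-(a * x))) = a⁻¹ * 1 := by
    have h3 := integral_comp_mul_left_Ioi (fun y : ℝ => Real.exp (-y)) 0 ha
    rw [integral_exp_neg_Ioi] at h3
    rw [h3, mul_zero, neg_zero, Real.exp_zero, smul_eq_mul]
  rw [h2, mul_one, div_eq_mul_inv]

/-- One-dimensional `W^{1,1}` kernel-approximation estimate: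
`‖K - K_{N+1}‖_{W^{1,1}(ℝ)} ≤ 4 max |h - P_N| + max |h' - P_N'|`. -/
theorem statement13 (K J : ℝ → ℝ) (L L₂ L₂' : ℝ)
    (hK1 : Integrable K volume) (hKJ : ∀ x : ℝ, K x = J |x|)
    (hJc : ContDiffOn ℝ 1 J (Ici 0))
    (hL : Tendsto (fun r => Real.exp r * J r) atTop (nhds L))
    (hL₂ : Tendsto (fun r => Real.exp (2 * r) * J r) atTop (nhds L₂))
    (hL₂' : Tendsto (fun r => Real.exp (2 * r) * deriv J r) atTop (nhds L₂'))
    (N : ℕ) (α : Fin (N + 1) → ℝ) (C C' : ℝ)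
    (hC : ∀ lam ∈ Icc (0:ℝ) 1,
      |(if lam = 0 then L else J (-Real.log lam) / lam)
        - ∑ j : Fin (N + 1), α j * (((j : ℝ) + 1) / 2) * lam ^ (j : ℕ)| ≤ C)
    (hC' : ∀ lam ∈ Icc (0:ℝ) 1,
      |(if lam = 0 then -(L₂' + L₂) else
          -((deriv J (-Real.log lam) + J (-Real.log lam)) / lam ^ 2))
        - ∑ j : Fin (N + 1), α j * (((j : ℝ) + 1) / 2) * (j : ℝ) * lam ^ ((j : ℕ) - 1)| ≤ C') :
    (∫ x : ℝ, |K x - ∑ j : Fin (N + 1),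
        α j * (((j : ℝ) + 1) / 2) * Real.exp (-((j : ℝ) + 1) * |x|)|)
      + (∫ x : ℝ, |deriv (fun y : ℝ => K y - ∑ j : Fin (N + 1),
          α j * (((j : ℝ) + 1) / 2) * Real.exp (-((j : ℝ) + 1) * |y|)) x|)
      ≤ 4 * C + C' := by
  classical
  have h1mem : (1:ℝ) ∈ Icc (0:ℝ) 1 := ⟨zero_le_one, le_rfl⟩
  have hC0 : 0 ≤ C := le_trans (abs_nonneg _) (hC 1 h1mem)
  have hC'0 : 0 ≤ C' := le_trans (abs_nonneg _) (hC' 1 h1mem)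
  -- pointwise bound for the function itself
  have hbound : ∀ x : ℝ,
      |K x - ∑ j : Fin (N + 1), α j * (((j : ℝ) + 1) / 2) * Real.exp (-((j : ℝ) + 1) * |x|)|
        ≤ C * Real.exp (-(1 * |x|)) := by
    intro x
    set l := Real.exp (-|x|) with hldef
    have hl0 : 0 < l := Real.exp_pos _
    have hl1 : l ≤ 1 := Real.exp_le_one_iff.mpr (neg_nonpos.mpr (abs_nonneg x))
    have hB := hC l ⟨hl0.le, hl1⟩
    rw [if_neg hl0.ne'] at hB
    have hlog : -Real.log l = |x| := by rw [hldef, Real.log_exp, neg_neg]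
    rw [hlog] at hB
    have hterm : ∀ j : Fin (N + 1),
        Real.exp (-((j : ℝ) + 1) * |x|) = l ^ ((j : ℕ) + 1) := by
      intro j
      rw [hldef, ← Real.exp_nat_mul]
      congr 1
      push_cast
      ring
    have hgx : K x - ∑ j : Fin (N + 1), α j * (((j : ℝ) + 1) / 2) * Real.exp (-((j : ℝ) + 1) * |x|)
        = l * (J |x| / l - ∑ j : Fin (N + 1), α j * (((j : ℝ) + 1) / 2) * l ^ (j : ℕ)) := by
      rw [hKJ x, mul_sub, mul_div_cancel₀ _ hl0.ne', Finset.mul_sum]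
      congr 1
      refine Finset.sum_congr rfl fun j _ => ?_
      rw [hterm j, pow_succ]
      ring
    rw [hgx, abs_mul, abs_of_pos hl0]
    have hfin : l * C ≤ C * Real.exp (-(1 * |x|)) := le_of_eq (by rw [one_mul, mul_comm])
    exact le_trans (mul_le_mul_of_nonneg_left hB hl0.le) hfin
  -- algebraic bound on the derivative value, for x > 0
  have hVb : ∀ x : ℝ, 0 < x →
      |deriv J x - ∑ j : Fin (N + 1),
          α j * (((j : ℝ) + 1) / 2) * (-((j : ℝ) + 1) * Real.exp (-((j : ℝ) + 1) * x))|
        ≤ C' * Real.exp (-(2 * |x|)) + C * Real.exp (-(1 * |x|)) := by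
    intro x hx
    rw [abs_of_pos hx]
    set l := Real.exp (-x) with hldef
    have hl0 : 0 < l := Real.exp_pos _
    have hl1 : l ≤ 1 := Real.exp_le_one_iff.mpr (by linarith)
    have hA := hC' l ⟨hl0.le, hl1⟩
    have hB := hC l ⟨hl0.le, hl1⟩
    rw [if_neg hl0.ne'] at hA hB
    have hlog : -Real.log l = x := by rw [hldef, Real.log_exp, neg_neg]
    rw [hlog] at hA hB
    have hterm : ∀ j : Fin (N + 1),
        Real.exp (-((j : ℝ) + 1) * x) = l ^ ((j : ℕ) + 1) := by
      intro j
      rw [hldef, ← Real.exp_nat_mul]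
      congr 1
      push_cast
      ring
    have e1 : l ^ 2 * (∑ j : Fin (N + 1), α j * (((j : ℝ) + 1) / 2) * (j : ℝ) * l ^ ((j : ℕ) - 1))
        = ∑ j : Fin (N + 1), α j * (((j : ℝ) + 1) / 2) * (j : ℝ) * l ^ ((j : ℕ) + 1) := by
      rw [Finset.mul_sum]
      refine Finset.sum_congr rfl fun j _ => ?_
      rcases Nat.eq_zero_or_pos (j : ℕ) with h | h
      · simp [h]
      · have h2 : (j : ℕ) + 1 = (j : ℕ) - 1 + 2 := by omega
        rw [h2, pow_add]
        ring
    have e2 : l * (∑ j : Fin (N + 1), α j * (((j : ℝ) + 1) / 2) * l ^ (j : ℕ))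
        = ∑ j : Fin (N + 1), α j * (((j : ℝ) + 1) / 2) * l ^ ((j : ℕ) + 1) := by
      rw [Finset.mul_sum]
      refine Finset.sum_congr rfl fun j _ => ?_
      rw [pow_succ]
      ring
    have h3 : ∑ j : Fin (N + 1),
          α j * (((j : ℝ) + 1) / 2) * (-((j : ℝ) + 1) * Real.exp (-((j : ℝ) + 1) * x))
        = -(∑ j : Fin (N + 1), α j * (((j : ℝ) + 1) / 2) * (j : ℝ) * l ^ ((j : ℕ) + 1))
          - ∑ j : Fin (N + 1), α j * (((j : ℝ) + 1) / 2) * l ^ ((j : ℕ) + 1) := by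
      rw [← Finset.sum_neg_distrib, ← Finset.sum_sub_distrib]
      refine Finset.sum_congr rfl fun j _ => ?_
      rw [hterm j]
      ring
    have hAkey : l ^ 2 * (-((deriv J x + J x) / l ^ 2)
          - ∑ j : Fin (N + 1), α j * (((j : ℝ) + 1) / 2) * (j : ℝ) * l ^ ((j : ℕ) - 1))
        = -(deriv J x) - J x
          - ∑ j : Fin (N + 1), α j * (((j : ℝ) + 1) / 2) * (j : ℝ) * l ^ ((j : ℕ) + 1) := by
      rw [mul_sub, e1, mul_neg, mul_div_cancel₀ _ (pow_ne_zero 2 hl0.ne')]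
      ring
    have hBkey : l * (J x / l - ∑ j : Fin (N + 1), α j * (((j : ℝ) + 1) / 2) * l ^ (j : ℕ))
        = J x - ∑ j : Fin (N + 1), α j * (((j : ℝ) + 1) / 2) * l ^ ((j : ℕ) + 1) := by
      rw [mul_sub, e2, mul_div_cancel₀ _ hl0.ne']
    have key : deriv J x - ∑ j : Fin (N + 1),
          α j * (((j : ℝ) + 1) / 2) * (-((j : ℝ) + 1) * Real.exp (-((j : ℝ) + 1) * x))
        = -(l ^ 2 * (-((deriv J x + J x) / l ^ 2)
            - ∑ j : Fin (N + 1), α j * (((j : ℝ) + 1) / 2) * (j : ℝ) * l ^ ((j : ℕ) - 1)))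
          - l * (J x / l - ∑ j : Fin (N + 1), α j * (((j : ℝ) + 1) / 2) * l ^ (j : ℕ)) := by
      rw [hAkey, hBkey, h3]
      ring
    rw [key]
    have hsq : Real.exp (-x) ^ 2 = Real.exp (-(2 * x)) := by
      rw [← Real.exp_nat_mul]
      congr 1
      push_cast
      ring
    calc |(-(l ^ 2 * (-((deriv J x + J x) / l ^ 2)
            - ∑ j : Fin (N + 1), α j * (((j : ℝ) + 1) / 2) * (j : ℝ) * l ^ ((j : ℕ) - 1))))
          - l * (J x / l - ∑ j : Fin (N + 1), α j * (((j : ℝ) + 1) / 2) * l ^ (j : ℕ))|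
        ≤ |(-(l ^ 2 * (-((deriv J x + J x) / l ^ 2)
            - ∑ j : Fin (N + 1), α j * (((j : ℝ) + 1) / 2) * (j : ℝ) * l ^ ((j : ℕ) - 1))))|
          + |l * (J x / l - ∑ j : Fin (N + 1), α j * (((j : ℝ) + 1) / 2) * l ^ (j : ℕ))| :=
          abs_sub _ _
      _ = l ^ 2 * |(-((deriv J x + J x) / l ^ 2)
            - ∑ j : Fin (N + 1), α j * (((j : ℝ) + 1) / 2) * (j : ℝ) * l ^ ((j : ℕ) - 1))|
          + l * |J x / l - ∑ j : Fin (N + 1), α j * (((j : ℝ) + 1) / 2) * l ^ (j : ℕ)| := by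
          rw [abs_neg, abs_mul, abs_mul, abs_of_pos hl0, abs_of_pos (pow_pos hl0 2)]
      _ ≤ l ^ 2 * C' + l * C := by
          refine add_le_add (mul_le_mul_of_nonneg_left hA (by positivity))
            (mul_le_mul_of_nonneg_left hB hl0.le)
      _ = C' * Real.exp (-(2 * x)) + C * Real.exp (-(1 * x)) := by
          rw [hldef, hsq, one_mul]
          ring
  -- derivative of the function for x > 0
  have hgd : ∀ x : ℝ, 0 < x →
      HasDerivAt (fun y : ℝ => K y - ∑ j : Fin (N + 1),
          α j * (((j : ℝ) + 1) / 2) * Real.exp (-((j : ℝ) + 1) * |y|))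
        (deriv J x - ∑ j : Fin (N + 1),
          α j * (((j : ℝ) + 1) / 2) * (-((j : ℝ) + 1) * Real.exp (-((j : ℝ) + 1) * x))) x := by
    intro x hx
    have hJd : DifferentiableAt ℝ J x :=
      ((hJc.differentiableOn one_ne_zero) x (le_of_lt hx)).differentiableAt (Ici_mem_nhds hx)
    have hKd : HasDerivAt K (deriv J x) x := by
      refine hJd.hasDerivAt.congr_of_eventuallyEq ?_
      filter_upwards [Ioi_mem_nhds hx] with y hy
      rw [hKJ y, abs_of_pos hy]
    have hSd : HasDerivAt (fun y : ℝ => ∑ j : Fin (N + 1),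
          α j * (((j : ℝ) + 1) / 2) * Real.exp (-((j : ℝ) + 1) * |y|))
        (∑ j : Fin (N + 1),
          α j * (((j : ℝ) + 1) / 2) * (-((j : ℝ) + 1) * Real.exp (-((j : ℝ) + 1) * x))) x := by
      have hmain : HasDerivAt (fun y : ℝ => ∑ j : Fin (N + 1),
            α j * (((j : ℝ) + 1) / 2) * Real.exp (-((j : ℝ) + 1) * y))
          (∑ j : Fin (N + 1),
            α j * (((j : ℝ) + 1) / 2) * (-((j : ℝ) + 1) * Real.exp (-((j : ℝ) + 1) * x))) x := by
        refine HasDerivAt.fun_sum fun j _ => ?_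
        have hlin : HasDerivAt (fun y : ℝ => -((j : ℝ) + 1) * y) (-((j : ℝ) + 1)) x := by
          simpa using (hasDerivAt_id x).const_mul (-((j : ℝ) + 1))
        have hexp := hlin.exp
        have hfull := hexp.const_mul (α j * (((j : ℝ) + 1) / 2))
        exact hfull.congr_deriv (by ring)
      refine hmain.congr_of_eventuallyEq ?_
      filter_upwards [Ioi_mem_nhds hx] with y hy
      simp only [abs_of_pos (mem_Ioi.mp hy)]
    exact hKd.sub hSd
  -- bound for the derivative, away from 0
  have hbd : ∀ x : ℝ, x ≠ 0 →
      |deriv (fun y : ℝ => K y - ∑ j : Fin (N + 1),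
          α j * (((j : ℝ) + 1) / 2) * Real.exp (-((j : ℝ) + 1) * |y|)) x|
        ≤ C' * Real.exp (-(2 * |x|)) + C * Real.exp (-(1 * |x|)) := by
    intro x hx0
    rcases hx0.lt_or_gt with hx | hx
    · have hpos : 0 < -x := by linarith
      have hd := hgd (-x) hpos
      have hcomp := hd.comp x (hasDerivAt_neg' (x := x))
      have hfun : ((fun y : ℝ => K y - ∑ j : Fin (N + 1),
            α j * (((j : ℝ) + 1) / 2) * Real.exp (-((j : ℝ) + 1) * |y|)) ∘ fun y : ℝ => -y)
          = fun y : ℝ => K y - ∑ j : Fin (N + 1),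
            α j * (((j : ℝ) + 1) / 2) * Real.exp (-((j : ℝ) + 1) * |y|) := by
        funext y
        simp only [Function.comp_apply, abs_neg]
        rw [hKJ (-y), hKJ y, abs_neg]
      rw [hfun] at hcomp
      have hV := hVb (-x) hpos
      rw [hcomp.deriv, mul_neg_one, abs_neg]
      have habs : |(-x)| = |x| := abs_neg x
      rw [habs] at hV
      exact hV
    · rw [(hgd x hx).deriv]
      exact hVb x hx
  -- integrable majorants
  have hint1 : Integrable (fun x : ℝ => Real.exp (-(1 * |x|))) := exp_abs_integrable one_pos
  have hint2 : Integrable (fun x : ℝ => Real.exp (-(2 * |x|))) := exp_abs_integrable two_pos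
  have I1 : (∫ x : ℝ, |K x - ∑ j : Fin (N + 1),
        α j * (((j : ℝ) + 1) / 2) * Real.exp (-((j : ℝ) + 1) * |x|)|) ≤ 2 * C := by
    have hmono := integral_mono_of_nonneg (f := fun x : ℝ => |K x - ∑ j : Fin (N + 1),
        α j * (((j : ℝ) + 1) / 2) * Real.exp (-((j : ℝ) + 1) * |x|)|)
        (g := fun x : ℝ => C * Real.exp (-(1 * |x|)))
        (Eventually.of_forall fun x => abs_nonneg _) (hint1.const_mul C)
        (Eventually.of_forall hbound)
    calc (∫ x : ℝ, |K x - ∑ j : Fin (N + 1),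
          α j * (((j : ℝ) + 1) / 2) * Real.exp (-((j : ℝ) + 1) * |x|)|)
        ≤ ∫ x : ℝ, C * Real.exp (-(1 * |x|)) := hmono
      _ = C * (2 / 1) := by rw [integral_const_mul, exp_abs_integral one_pos]
      _ = 2 * C := by ring
  have I2 : (∫ x : ℝ, |deriv (fun y : ℝ => K y - ∑ j : Fin (N + 1),
        α j * (((j : ℝ) + 1) / 2) * Real.exp (-((j : ℝ) + 1) * |y|)) x|) ≤ C' + 2 * C := by
    have hmaj : Integrable (fun x : ℝ =>
        C' * Real.exp (-(2 * |x|)) + C * Real.exp (-(1 * |x|))) :=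
      (hint2.const_mul C').add (hint1.const_mul C)
    have h0 : ∀ᵐ x : ℝ, x ≠ (0:ℝ) := by
      rw [ae_iff]
      simp only [ne_eq, not_not, Set.setOf_eq_eq_singleton]
      exact measure_singleton 0
    have hae : ∀ᵐ x : ℝ, |deriv (fun y : ℝ => K y - ∑ j : Fin (N + 1),
          α j * (((j : ℝ) + 1) / 2) * Real.exp (-((j : ℝ) + 1) * |y|)) x|
        ≤ C' * Real.exp (-(2 * |x|)) + C * Real.exp (-(1 * |x|)) := by
      filter_upwards [h0] with x hx using hbd x hx
    have hmono := integral_mono_of_nonneg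
        (f := fun x : ℝ => |deriv (fun y : ℝ => K y - ∑ j : Fin (N + 1),
          α j * (((j : ℝ) + 1) / 2) * Real.exp (-((j : ℝ) + 1) * |y|)) x|)
        (Eventually.of_forall fun x => abs_nonneg _) hmaj hae
    calc (∫ x : ℝ, |deriv (fun y : ℝ => K y - ∑ j : Fin (N + 1),
          α j * (((j : ℝ) + 1) / 2) * Real.exp (-((j : ℝ) + 1) * |y|)) x|)
        ≤ ∫ x : ℝ, (C' * Real.exp (-(2 * |x|)) + C * Real.exp (-(1 * |x|))) := hmono
      _ = C' * (2 / 2) + C * (2 / 1) := by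
          rw [integral_add (hint2.const_mul C') (hint1.const_mul C),
            integral_const_mul, integral_const_mul, exp_abs_integral two_pos,
            exp_abs_integral one_pos]
      _ = C' + 2 * C := by ring
  linarith [I1, I2]
end
end

section
/- Let n ≥ 1 and let H(t,x) := (4πt)^{−n/2} exp(−|x|²/(4t)) be the heat kernel on ℝⁿ. For every γ ∈ (0,1) there exists a constant C = C(γ, n) > 0 such that for every t > 0, every index j ∈ {1, …, n}, and every φ ∈ L^∞(ℝⁿ), the Hölder seminorm of (∂H/∂x_j)(t,·)*φ satisfies sup_{x≠z} |((∂H/∂x_j)(t)*φ)(x) − ((∂H/∂x_j)(t)*φ)(z)| / |x−z|^γ ≤ C t^{−(1+γ)/2} ‖φ‖_{L^∞}. -/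
open MeasureTheory Real Set Filter
open scoped ENNReal NNReal

noncomputable section

open scoped RealInnerProductSpace

namespace S19

variable {n : ℕ}

lemma gauss_integrable (β : ℝ) (hβ : 0 < β) :
    Integrable (fun y : Eu n => Real.exp (-β * ‖y‖ ^ 2)) volume := by
  have h := (GaussianFourier.integrable_cexp_neg_mul_sq_norm_add (V := Eu n)
      (b := (β : ℂ)) (by simpa using hβ) 0 0).norm
  refine h.congr (Filter.Eventually.of_forall fun y => ?_)
  simp [Complex.norm_exp, ← Complex.ofReal_pow]

lemma gauss_integral (β : ℝ) (hβ : 0 < β) :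
    ∫ y : Eu n, Real.exp (-β * ‖y‖ ^ 2) = (π / β) ^ ((n : ℝ) / 2) := by
  rw [GaussianFourier.integral_rexp_neg_mul_sq_norm (V := Eu n) hβ]
  norm_num [finrank_euclideanSpace_fin]

lemma hasFDerivAt_gaussMul (k b : ℝ) (e w : Eu n) :
    HasFDerivAt (fun x : Eu n => k * (Real.exp (-b * ‖x‖ ^ 2) * ⟪e, x⟫))
      ((k * Real.exp (-b * ‖w‖ ^ 2)) • (innerSL ℝ e) +
        ((k * Real.exp (-b * ‖w‖ ^ 2) * ⟪e, w⟫ * (-2 * b)) • (innerSL ℝ w))) w := by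
  have h1 : HasFDerivAt (fun x : Eu n => ‖x‖ ^ 2)
      ((2 : ℕ) • (innerSL ℝ w : Eu n →L[ℝ] ℝ)) w := (hasStrictFDerivAt_norm_sq w).hasFDerivAt
  have h2 : HasFDerivAt (fun x : Eu n => Real.exp (-b * ‖x‖ ^ 2))
      (Real.exp (-b * ‖w‖ ^ 2) • ((-b) • ((2 : ℕ) • (innerSL ℝ w : Eu n →L[ℝ] ℝ)))) w :=
    (h1.const_mul (-b)).exp
  have h3 : HasFDerivAt (fun x : Eu n => ⟪e, x⟫) (innerSL ℝ e : Eu n →L[ℝ] ℝ) w :=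
    (innerSL ℝ e).hasFDerivAt
  have h4 := (h2.mul h3).const_mul k
  refine HasFDerivAt.congr_fderiv h4 ?_
  ext v
  simp only [ContinuousLinearMap.add_apply, ContinuousLinearMap.smul_apply, smul_eq_mul,
    ContinuousLinearMap.coe_smul', Pi.smul_apply, innerSL_apply_apply]
  ring


lemma real1 {t r : ℝ} (ht : 0 < t) (hr : 0 ≤ r) :
    r * Real.exp (-(1 / (4 * t)) * r ^ 2)
      ≤ 2 * Real.sqrt t * Real.exp (-(1 / (8 * t)) * r ^ 2) := by
  have hs : 0 < Real.sqrt t := Real.sqrt_pos.2 ht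
  have hs2 : Real.sqrt t ^ 2 = t := Real.sq_sqrt ht.le
  have h1 : 1 + 1 / (8 * t) * r ^ 2 ≤ Real.exp (1 / (8 * t) * r ^ 2) := by
    have := Real.add_one_le_exp (1 / (8 * t) * r ^ 2); linarith
  have h2 : r ≤ 2 * Real.sqrt t * Real.exp (1 / (8 * t) * r ^ 2) := by
    have key : r ≤ 2 * Real.sqrt t * (1 + 1 / (8 * t) * r ^ 2) := by
      rw [← sub_nonneg]
      have expand : 2 * Real.sqrt t * (1 + 1 / (8 * t) * r ^ 2) - r
          = (2 * Real.sqrt t * (8 * t + r ^ 2) - 8 * t * r) / (8 * t) := by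
        field_simp
      have expand2 : 2 * Real.sqrt t * (8 * t + r ^ 2) - 8 * t * r
          = 2 * Real.sqrt t * ((r - 2 * Real.sqrt t) ^ 2 + 4 * t) := by
        linear_combination (8 * (r - Real.sqrt t)) * hs2
      rw [expand, expand2]
      apply div_nonneg _ (by linarith)
      apply mul_nonneg (by positivity)
      nlinarith [sq_nonneg (r - 2 * Real.sqrt t)]
    calc r ≤ 2 * Real.sqrt t * (1 + 1 / (8 * t) * r ^ 2) := key
    _ ≤ 2 * Real.sqrt t * Real.exp (1 / (8 * t) * r ^ 2) := by nlinarith [h1, hs]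
  calc r * Real.exp (-(1 / (4 * t)) * r ^ 2)
      ≤ (2 * Real.sqrt t * Real.exp (1 / (8 * t) * r ^ 2)) * Real.exp (-(1 / (4 * t)) * r ^ 2) := by
        exact mul_le_mul_of_nonneg_right h2 (Real.exp_pos _).le
    _ = 2 * Real.sqrt t * Real.exp (-(1 / (8 * t)) * r ^ 2) := by
        rw [mul_assoc, ← Real.exp_add]
        congr 2
        field_simp
        ring

lemma real2 {t r : ℝ} (ht : 0 < t) :
    (1 + 2 * (1 / (4 * t)) * r ^ 2) * Real.exp (-(1 / (4 * t)) * r ^ 2)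
      ≤ 4 * Real.exp (-(1 / (8 * t)) * r ^ 2) := by
  have h1 : 1 + 1 / (8 * t) * r ^ 2 ≤ Real.exp (1 / (8 * t) * r ^ 2) := by
    have := Real.add_one_le_exp (1 / (8 * t) * r ^ 2); linarith
  have hu : 0 ≤ 1 / (8 * t) * r ^ 2 := by positivity
  have h2 : 1 + 2 * (1 / (4 * t)) * r ^ 2 ≤ 4 * Real.exp (1 / (8 * t) * r ^ 2) := by
    have harith : 1 + 2 * (1 / (4 * t)) * r ^ 2 ≤ 4 * (1 + 1 / (8 * t) * r ^ 2) := by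
      have : 2 * (1 / (4 * t)) * r ^ 2 = 4 * (1 / (8 * t) * r ^ 2) := by
        field_simp; ring
      linarith
    linarith [mul_le_mul_of_nonneg_left h1 (by norm_num : (0:ℝ) ≤ 4)]
  calc (1 + 2 * (1 / (4 * t)) * r ^ 2) * Real.exp (-(1 / (4 * t)) * r ^ 2)
      ≤ (4 * Real.exp (1 / (8 * t) * r ^ 2)) * Real.exp (-(1 / (4 * t)) * r ^ 2) := by
        exact mul_le_mul_of_nonneg_right h2 (Real.exp_pos _).le
    _ = 4 * Real.exp (-(1 / (8 * t)) * r ^ 2) := by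
        rw [mul_assoc, ← Real.exp_add]
        congr 2
        field_simp
        ring

lemma real3 {t r r₀ : ℝ} (ht : 0 < t) (hr : 0 ≤ r) (hr₀ : 0 ≤ r₀)
    (h : r₀ ≤ r + Real.sqrt t) :
    Real.exp (-(1 / (8 * t)) * r ^ 2) ≤ 2 * Real.exp (-(1 / (32 * t)) * r₀ ^ 2) := by
  have hs : 0 < Real.sqrt t := Real.sqrt_pos.2 ht
  have hs2 : Real.sqrt t ^ 2 = t := Real.sq_sqrt ht.le
  by_cases hc : r₀ ≤ 2 * Real.sqrt t
  · have hL : Real.exp (-(1 / (8 * t)) * r ^ 2) ≤ 1 := by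
      apply Real.exp_le_one_iff.2
      have : 0 ≤ 1 / (8 * t) * r ^ 2 := by positivity
      linarith
    have hr₀2 : r₀ ^ 2 ≤ 4 * t := by nlinarith
    have hsmall : 1 / (32 * t) * r₀ ^ 2 ≤ 1 / 8 := by
      rw [div_mul_eq_mul_div, div_le_div_iff₀ (by linarith) (by norm_num)]
      linarith
    have hexp : 1 - 1 / (32 * t) * r₀ ^ 2 ≤ Real.exp (-(1 / (32 * t)) * r₀ ^ 2) := by
      have := Real.add_one_le_exp (-(1 / (32 * t)) * r₀ ^ 2); linarith
    have : (7:ℝ) / 4 ≤ 2 * Real.exp (-(1 / (32 * t)) * r₀ ^ 2) := by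
      nlinarith
    linarith
  · push_neg at hc
    have hrr : r₀ / 2 ≤ r := by linarith
    have : r₀ ^ 2 / 4 ≤ r ^ 2 := by nlinarith
    have harg : -(1 / (8 * t)) * r ^ 2 ≤ -(1 / (32 * t)) * r₀ ^ 2 := by
      rw [neg_mul, neg_mul, neg_le_neg_iff]
      calc 1 / (32 * t) * r₀ ^ 2 = 1 / (8 * t) * (r₀ ^ 2 / 4) := by ring
        _ ≤ 1 / (8 * t) * r ^ 2 := by
            apply mul_le_mul_of_nonneg_left this (by positivity)
    calc Real.exp (-(1 / (8 * t)) * r ^ 2) ≤ Real.exp (-(1 / (32 * t)) * r₀ ^ 2) :=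
          Real.exp_le_exp.2 harg
      _ ≤ 2 * Real.exp (-(1 / (32 * t)) * r₀ ^ 2) := by
          nlinarith [Real.exp_pos (-(1 / (32 * t)) * r₀ ^ 2)]


/-- The gradient kernel `∂H/∂e`. -/
def Fk (n : ℕ) (t : ℝ) (e w : Eu n) : ℝ :=
  (-(2 * (1 / (4 * t)) * ((4 * π * t) ^ (-(n : ℝ) / 2)))) *
    (Real.exp (-(1 / (4 * t)) * ‖w‖ ^ 2) * ⟪e, w⟫)

variable {t : ℝ}

lemma heatK_eq (ht : 0 < t) : heatK n 1 t = fun x : Eu n =>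
    (4 * π * t) ^ (-(n : ℝ) / 2) * Real.exp (-(1 / (4 * t)) * ‖x‖ ^ 2) := by
  funext x
  unfold heatK
  rw [show (4 : ℝ) * π * 1 * t = 4 * π * t by ring,
    show -‖x‖ ^ 2 / (4 * 1 * t) = -(1 / (4 * t)) * ‖x‖ ^ 2 by ring]

lemma hasFDerivAt_heatK (ht : 0 < t) (w : Eu n) :
    HasFDerivAt (heatK n 1 t)
      ((((4 * π * t) ^ (-(n : ℝ) / 2)) * Real.exp (-(1 / (4 * t)) * ‖w‖ ^ 2) *
          (-2 * (1 / (4 * t)))) • (innerSL ℝ w : Eu n →L[ℝ] ℝ)) w := by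
  rw [heatK_eq ht]
  have h1 : HasFDerivAt (fun x : Eu n => ‖x‖ ^ 2)
      ((2 : ℕ) • (innerSL ℝ w : Eu n →L[ℝ] ℝ)) w := (hasStrictFDerivAt_norm_sq w).hasFDerivAt
  have h2 := ((h1.const_mul (-(1 / (4 * t)))).exp).const_mul ((4 * π * t) ^ (-(n : ℝ) / 2))
  refine HasFDerivAt.congr_fderiv h2 ?_
  ext v
  simp only [ContinuousLinearMap.smul_apply, smul_eq_mul, ContinuousLinearMap.coe_smul',
    Pi.smul_apply, innerSL_apply_apply, nsmul_eq_mul, Nat.cast_ofNat]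
  ring

lemma fderiv_heatK_apply (ht : 0 < t) (w e : Eu n) :
    fderiv ℝ (heatK n 1 t) w e = Fk n t e w := by
  rw [(hasFDerivAt_heatK ht w).fderiv]
  simp only [ContinuousLinearMap.smul_apply, innerSL_apply_apply, smul_eq_mul, Fk]
  rw [real_inner_comm w e]
  ring

lemma Fk_hasFDerivAt (e w : Eu n) :
    HasFDerivAt (Fk n t e)
      (((-(2 * (1 / (4 * t)) * ((4 * π * t) ^ (-(n : ℝ) / 2))) *
            Real.exp (-(1 / (4 * t)) * ‖w‖ ^ 2)) • (innerSL ℝ e)) +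
        ((-(2 * (1 / (4 * t)) * ((4 * π * t) ^ (-(n : ℝ) / 2))) *
            Real.exp (-(1 / (4 * t)) * ‖w‖ ^ 2) * ⟪e, w⟫ * (-2 * (1 / (4 * t)))) •
          (innerSL ℝ w))) w :=
  hasFDerivAt_gaussMul _ _ e w

lemma Fk_cont (e : Eu n) : Continuous (Fk n t e) := by
  unfold Fk
  exact continuous_const.mul ((Real.continuous_exp.comp
    (continuous_const.mul ((continuous_norm).pow 2))).mul (innerSL ℝ e).continuous)

lemma Fk_abs_le (ht : 0 < t) {e : Eu n} (he : ‖e‖ = 1) (w : Eu n) :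
    |Fk n t e w| ≤ ((4 * π * t) ^ (-(n : ℝ) / 2) / Real.sqrt t) *
      Real.exp (-(1 / (8 * t)) * ‖w‖ ^ 2) := by
  have hc : 0 < (4 * π * t) ^ (-(n : ℝ) / 2) :=
    Real.rpow_pos_of_pos (by positivity) _
  have hs : 0 < Real.sqrt t := Real.sqrt_pos.2 ht
  have hst : Real.sqrt t * Real.sqrt t = t := Real.mul_self_sqrt ht.le
  have h1 : |⟪e, w⟫| ≤ ‖w‖ := by
    have := abs_real_inner_le_norm e w
    rwa [he, one_mul] at this
  have hE : (0:ℝ) < Real.exp (-(1 / (4 * t)) * ‖w‖ ^ 2) := Real.exp_pos _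
  have key : ‖w‖ * Real.exp (-(1 / (4 * t)) * ‖w‖ ^ 2)
      ≤ 2 * Real.sqrt t * Real.exp (-(1 / (8 * t)) * ‖w‖ ^ 2) :=
    real1 ht (norm_nonneg w)
  have habs : |Fk n t e w| = (2 * (1 / (4 * t)) * ((4 * π * t) ^ (-(n : ℝ) / 2))) *
      (Real.exp (-(1 / (4 * t)) * ‖w‖ ^ 2) * |⟪e, w⟫|) := by
    unfold Fk
    rw [abs_mul, abs_mul, abs_neg, abs_of_pos (by positivity : (0:ℝ) <
      2 * (1 / (4 * t)) * ((4 * π * t) ^ (-(n : ℝ) / 2))), abs_of_pos hE]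
  rw [habs]
  have step : Real.exp (-(1 / (4 * t)) * ‖w‖ ^ 2) * |⟪e, w⟫|
      ≤ 2 * Real.sqrt t * Real.exp (-(1 / (8 * t)) * ‖w‖ ^ 2) := by
    calc Real.exp (-(1 / (4 * t)) * ‖w‖ ^ 2) * |⟪e, w⟫|
        ≤ Real.exp (-(1 / (4 * t)) * ‖w‖ ^ 2) * ‖w‖ :=
          mul_le_mul_of_nonneg_left h1 hE.le
      _ = ‖w‖ * Real.exp (-(1 / (4 * t)) * ‖w‖ ^ 2) := by ring
      _ ≤ 2 * Real.sqrt t * Real.exp (-(1 / (8 * t)) * ‖w‖ ^ 2) := key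
  calc (2 * (1 / (4 * t)) * ((4 * π * t) ^ (-(n : ℝ) / 2))) *
      (Real.exp (-(1 / (4 * t)) * ‖w‖ ^ 2) * |⟪e, w⟫|)
      ≤ (2 * (1 / (4 * t)) * ((4 * π * t) ^ (-(n : ℝ) / 2))) *
        (2 * Real.sqrt t * Real.exp (-(1 / (8 * t)) * ‖w‖ ^ 2)) :=
        mul_le_mul_of_nonneg_left step (by positivity)
    _ = ((4 * π * t) ^ (-(n : ℝ) / 2) / Real.sqrt t) *
        Real.exp (-(1 / (8 * t)) * ‖w‖ ^ 2) := by
        field_simp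
        linear_combination 4 * hst


lemma Fk_fderiv_norm_le (ht : 0 < t) {e : Eu n} (he : ‖e‖ = 1) (w : Eu n) :
    ‖fderiv ℝ (Fk n t e) w‖ ≤
      (2 * (4 * π * t) ^ (-(n : ℝ) / 2) / t) * Real.exp (-(1 / (8 * t)) * ‖w‖ ^ 2) := by
  rw [(Fk_hasFDerivAt e w).fderiv]
  have hc : 0 < (4 * π * t) ^ (-(n : ℝ) / 2) := Real.rpow_pos_of_pos (by positivity) _
  set c := (4 * π * t) ^ (-(n : ℝ) / 2) with hcdef
  set b := 1 / (4 * t) with hbdef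
  have hb : 0 < b := by rw [hbdef]; positivity
  set E := Real.exp (-b * ‖w‖ ^ 2) with hEdef
  have hE : 0 < E := Real.exp_pos _
  apply ContinuousLinearMap.opNorm_le_bound _ (by positivity)
  intro v
  have happ : ((-(2 * b * c) * E) • (innerSL ℝ e : Eu n →L[ℝ] ℝ) +
      (-(2 * b * c) * E * ⟪e, w⟫ * (-2 * b)) • (innerSL ℝ w : Eu n →L[ℝ] ℝ)) v
      = (-(2 * b * c) * E) * ⟪e, v⟫ + (-(2 * b * c) * E * ⟪e, w⟫ * (-2 * b)) * ⟪w, v⟫ := by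
    simp [ContinuousLinearMap.add_apply, ContinuousLinearMap.smul_apply, innerSL_apply_apply,
      smul_eq_mul]
  rw [happ]
  have h1 : |⟪e, v⟫| ≤ ‖v‖ := by
    have := abs_real_inner_le_norm e v; rwa [he, one_mul] at this
  have h2 : |⟪e, w⟫| ≤ ‖w‖ := by
    have := abs_real_inner_le_norm e w; rwa [he, one_mul] at this
  have h3 : |⟪w, v⟫| ≤ ‖w‖ * ‖v‖ := abs_real_inner_le_norm w v
  have habs : ‖(-(2 * b * c) * E) * ⟪e, v⟫ + (-(2 * b * c) * E * ⟪e, w⟫ * (-2 * b)) * ⟪w, v⟫‖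
      ≤ (2 * b * c) * E * |⟪e, v⟫| + (2 * b * c) * E * |⟪e, w⟫| * (2 * b) * |⟪w, v⟫| := by
    rw [Real.norm_eq_abs]
    refine (abs_add_le _ _).trans (le_of_eq ?_)
    simp only [abs_mul, abs_neg, abs_two]
    rw [abs_of_pos hb, abs_of_pos hc, abs_of_pos hE]
    try ring
  refine habs.trans ?_
  have step1 : (2 * b * c) * E * |⟪e, v⟫| ≤ (2 * b * c) * E * ‖v‖ := by
    apply mul_le_mul_of_nonneg_left h1 (by positivity)
  have step2 : (2 * b * c) * E * |⟪e, w⟫| * (2 * b) * |⟪w, v⟫|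
      ≤ (2 * b * c) * E * (2 * b) * ‖w‖ ^ 2 * ‖v‖ := by
    calc (2 * b * c) * E * |⟪e, w⟫| * (2 * b) * |⟪w, v⟫|
        ≤ (2 * b * c) * E * ‖w‖ * (2 * b) * (‖w‖ * ‖v‖) := by
          apply mul_le_mul
          · apply mul_le_mul_of_nonneg_right _ (by positivity)
            apply mul_le_mul_of_nonneg_left h2 (by positivity)
          · exact h3
          · exact abs_nonneg _
          · positivity
      _ = (2 * b * c) * E * (2 * b) * ‖w‖ ^ 2 * ‖v‖ := by ring
  have combo : (2 * b * c) * E * ‖v‖ + (2 * b * c) * E * (2 * b) * ‖w‖ ^ 2 * ‖v‖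
      = (2 * b * c) * ((1 + 2 * b * ‖w‖ ^ 2) * E) * ‖v‖ := by ring
  have hreal2 : (1 + 2 * b * ‖w‖ ^ 2) * E ≤ 4 * Real.exp (-(1 / (8 * t)) * ‖w‖ ^ 2) := by
    rw [hEdef, hbdef]
    exact real2 ht
  calc (2 * b * c) * E * |⟪e, v⟫| + (2 * b * c) * E * |⟪e, w⟫| * (2 * b) * |⟪w, v⟫|
      ≤ (2 * b * c) * E * ‖v‖ + (2 * b * c) * E * (2 * b) * ‖w‖ ^ 2 * ‖v‖ :=
        add_le_add step1 step2
    _ = (2 * b * c) * ((1 + 2 * b * ‖w‖ ^ 2) * E) * ‖v‖ := combo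
    _ ≤ (2 * b * c) * (4 * Real.exp (-(1 / (8 * t)) * ‖w‖ ^ 2)) * ‖v‖ := by
        apply mul_le_mul_of_nonneg_right _ (norm_nonneg v)
        apply mul_le_mul_of_nonneg_left hreal2 (by positivity)
    _ = (2 * c / t) * Real.exp (-(1 / (8 * t)) * ‖w‖ ^ 2) * ‖v‖ := by
        rw [hbdef]; field_simp

lemma Fk_lip (ht : 0 < t) {e : Eu n} (he : ‖e‖ = 1) {x z : Eu n}
    (hxz : ‖x - z‖ ≤ Real.sqrt t) (y : Eu n) :
    |Fk n t e (x - y) - Fk n t e (z - y)| ≤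
      (4 * (4 * π * t) ^ (-(n : ℝ) / 2) / t) *
        Real.exp (-(1 / (32 * t)) * ‖z - y‖ ^ 2) * ‖x - z‖ := by
  have hseg : ∀ u ∈ segment ℝ (z - y) (x - y), ‖u - (z - y)‖ ≤ Real.sqrt t := by
    rintro u ⟨a, b', ha, hb', hab, rfl⟩
    have ha' : a = 1 - b' := by linarith
    have hrw : a • (z - y) + b' • (x - y) - (z - y) = b' • ((x - y) - (z - y)) := by
      rw [ha']; module
    rw [hrw, norm_smul, Real.norm_eq_abs, abs_of_nonneg hb']
    have hb1 : b' ≤ 1 := by linarith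
    have : ‖x - y - (z - y)‖ = ‖x - z‖ := by rw [sub_sub_sub_cancel_right]
    rw [this]
    calc b' * ‖x - z‖ ≤ 1 * ‖x - z‖ :=
          mul_le_mul_of_nonneg_right hb1 (norm_nonneg _)
      _ = ‖x - z‖ := one_mul _
      _ ≤ Real.sqrt t := hxz
  have hbound : ∀ u ∈ segment ℝ (z - y) (x - y), ‖fderiv ℝ (Fk n t e) u‖ ≤
      (4 * (4 * π * t) ^ (-(n : ℝ) / 2) / t) * Real.exp (-(1 / (32 * t)) * ‖z - y‖ ^ 2) := by
    intro u hu
    refine (Fk_fderiv_norm_le ht he u).trans ?_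
    have hr₀ : ‖z - y‖ ≤ ‖u‖ + Real.sqrt t := by
      have h4 : ‖z - y‖ ≤ ‖u‖ + ‖u - (z - y)‖ := by
        have := norm_sub_le u (u - (z - y))
        simpa using this
      linarith [hseg u hu]
    have h5 : Real.exp (-(1 / (8 * t)) * ‖u‖ ^ 2) ≤
        2 * Real.exp (-(1 / (32 * t)) * ‖z - y‖ ^ 2) :=
      real3 ht (norm_nonneg u) (norm_nonneg _) hr₀
    calc (2 * (4 * π * t) ^ (-(n : ℝ) / 2) / t) * Real.exp (-(1 / (8 * t)) * ‖u‖ ^ 2)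
        ≤ (2 * (4 * π * t) ^ (-(n : ℝ) / 2) / t) *
          (2 * Real.exp (-(1 / (32 * t)) * ‖z - y‖ ^ 2)) := by
          apply mul_le_mul_of_nonneg_left h5
          have hc : 0 < (4 * π * t) ^ (-(n : ℝ) / 2) := Real.rpow_pos_of_pos (by positivity) _
          positivity
      _ = (4 * (4 * π * t) ^ (-(n : ℝ) / 2) / t) *
          Real.exp (-(1 / (32 * t)) * ‖z - y‖ ^ 2) := by ring
  have hdiff : ∀ u ∈ segment ℝ (z - y) (x - y), DifferentiableAt ℝ (Fk n t e) u :=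
    fun u _ => (Fk_hasFDerivAt e u).differentiableAt
  have := (convex_segment (z - y) (x - y)).norm_image_sub_le_of_norm_fderiv_le hdiff hbound
    (left_mem_segment ℝ _ _) (right_mem_segment ℝ _ _)
  rw [sub_sub_sub_cancel_right] at this
  simpa [Real.norm_eq_abs] using this


lemma gauss_shift_integrable (β : ℝ) (hβ : 0 < β) (x : Eu n) :
    Integrable (fun y : Eu n => Real.exp (-β * ‖x - y‖ ^ 2)) volume :=
  (gauss_integrable (n := n) β hβ).comp_sub_left x

lemma gauss_shift_integral (β : ℝ) (hβ : 0 < β) (x : Eu n) :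
    ∫ y : Eu n, Real.exp (-β * ‖x - y‖ ^ 2) = (π / β) ^ ((n : ℝ) / 2) := by
  have h := MeasureTheory.integral_sub_left_eq_self
    (fun y : Eu n => Real.exp (-β * ‖y‖ ^ 2)) (volume : Measure (Eu n)) x
  rw [h, gauss_integral β hβ]

lemma ae_abs_le {φ : Eu n → ℝ} (hφ : MemLp φ ⊤ (volume : Measure (Eu n))) :
    ∀ᵐ y : Eu n ∂volume, |φ y| ≤ (eLpNorm φ ⊤ volume).toReal := by
  have h := enorm_ae_le_eLpNormEssSup φ (volume : Measure (Eu n))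
  have hfin : eLpNormEssSup φ (volume : Measure (Eu n)) ≠ ⊤ := by
    rw [← eLpNorm_exponent_top]; exact hφ.2.ne
  filter_upwards [h] with y hy
  have h2 := ENNReal.toReal_mono hfin hy
  simpa [← Real.norm_eq_abs, eLpNorm_exponent_top] using h2

lemma conv_integrable (ht : 0 < t) {e : Eu n} (he : ‖e‖ = 1) {φ : Eu n → ℝ} {M : ℝ}
    (hφm : AEStronglyMeasurable φ (volume : Measure (Eu n)))
    (hb : ∀ᵐ y : Eu n ∂volume, |φ y| ≤ M) (x : Eu n) :
    Integrable (fun y : Eu n => Fk n t e (x - y) * φ y) volume := by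
  have hc : 0 < (4 * π * t) ^ (-(n : ℝ) / 2) := Real.rpow_pos_of_pos (by positivity) _
  have hs : 0 < Real.sqrt t := Real.sqrt_pos.2 ht
  have hint : Integrable (fun y : Eu n =>
      ((4 * π * t) ^ (-(n : ℝ) / 2) / Real.sqrt t) *
        Real.exp (-(1 / (8 * t)) * ‖x - y‖ ^ 2) * M) volume :=
    ((gauss_shift_integrable (1 / (8 * t)) (by positivity) x).const_mul _).mul_const M
  refine hint.mono' (((Fk_cont e).comp (continuous_const.sub continuous_id)).aestronglyMeasurable.mul hφm) ?_
  filter_upwards [hb] with y hy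
  rw [Real.norm_eq_abs, abs_mul]
  exact mul_le_mul (Fk_abs_le ht he _) hy (abs_nonneg _) (by positivity)

lemma conv_abs_le (ht : 0 < t) {e : Eu n} (he : ‖e‖ = 1) {φ : Eu n → ℝ} {M : ℝ}
    (hM : 0 ≤ M) (hb : ∀ᵐ y : Eu n ∂volume, |φ y| ≤ M) (x : Eu n) :
    |∫ y : Eu n, Fk n t e (x - y) * φ y| ≤
      ((4 * π * t) ^ (-(n : ℝ) / 2) / Real.sqrt t) * (8 * π * t) ^ ((n : ℝ) / 2) * M := by
  have hβ : (0:ℝ) < 1 / (8 * t) := by positivity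
  have hint : Integrable (fun y : Eu n =>
      ((4 * π * t) ^ (-(n : ℝ) / 2) / Real.sqrt t) *
        Real.exp (-(1 / (8 * t)) * ‖x - y‖ ^ 2) * M) volume :=
    ((gauss_shift_integrable (1 / (8 * t)) hβ x).const_mul _).mul_const M
  have hle : ∀ᵐ y : Eu n ∂volume, ‖Fk n t e (x - y) * φ y‖ ≤
      ((4 * π * t) ^ (-(n : ℝ) / 2) / Real.sqrt t) *
        Real.exp (-(1 / (8 * t)) * ‖x - y‖ ^ 2) * M := by
    filter_upwards [hb] with y hy
    rw [Real.norm_eq_abs, abs_mul]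
    have hc : 0 < (4 * π * t) ^ (-(n : ℝ) / 2) := Real.rpow_pos_of_pos (by positivity) _
    have hs : 0 < Real.sqrt t := Real.sqrt_pos.2 ht
    exact mul_le_mul (Fk_abs_le ht he _) hy (abs_nonneg _) (by positivity)
  have h8 : π / (1 / (8 * t)) = 8 * π * t := by
    field_simp
  calc |∫ y : Eu n, Fk n t e (x - y) * φ y|
      ≤ ∫ y : Eu n, ((4 * π * t) ^ (-(n : ℝ) / 2) / Real.sqrt t) *
          Real.exp (-(1 / (8 * t)) * ‖x - y‖ ^ 2) * M := by
        rw [← Real.norm_eq_abs]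
        exact norm_integral_le_of_norm_le hint hle
    _ = ((4 * π * t) ^ (-(n : ℝ) / 2) / Real.sqrt t) *
          (∫ y : Eu n, Real.exp (-(1 / (8 * t)) * ‖x - y‖ ^ 2)) * M := by
        rw [MeasureTheory.integral_mul_const, MeasureTheory.integral_const_mul]
    _ = ((4 * π * t) ^ (-(n : ℝ) / 2) / Real.sqrt t) * (8 * π * t) ^ ((n : ℝ) / 2) * M := by
        rw [gauss_shift_integral _ hβ, h8]

lemma conv_diff_le (ht : 0 < t) {e : Eu n} (he : ‖e‖ = 1) {φ : Eu n → ℝ} {M : ℝ}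
    (hφm : AEStronglyMeasurable φ (volume : Measure (Eu n)))
    (hM : 0 ≤ M) (hb : ∀ᵐ y : Eu n ∂volume, |φ y| ≤ M) {x z : Eu n}
    (hxz : ‖x - z‖ ≤ Real.sqrt t) :
    |(∫ y : Eu n, Fk n t e (x - y) * φ y) - ∫ y : Eu n, Fk n t e (z - y) * φ y| ≤
      (4 * (4 * π * t) ^ (-(n : ℝ) / 2) / t) * (32 * π * t) ^ ((n : ℝ) / 2) *
        (M * ‖x - z‖) := by
  have hβ : (0:ℝ) < 1 / (32 * t) := by positivity
  have hc : 0 < (4 * π * t) ^ (-(n : ℝ) / 2) := Real.rpow_pos_of_pos (by positivity) _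
  rw [← MeasureTheory.integral_sub (conv_integrable ht he hφm hb x)
    (conv_integrable ht he hφm hb z)]
  have hint : Integrable (fun y : Eu n =>
      (4 * (4 * π * t) ^ (-(n : ℝ) / 2) / t) *
        Real.exp (-(1 / (32 * t)) * ‖z - y‖ ^ 2) * (M * ‖x - z‖)) volume :=
    ((gauss_shift_integrable (1 / (32 * t)) hβ z).const_mul _).mul_const _
  have hle : ∀ᵐ y : Eu n ∂volume, ‖Fk n t e (x - y) * φ y - Fk n t e (z - y) * φ y‖ ≤
      (4 * (4 * π * t) ^ (-(n : ℝ) / 2) / t) *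
        Real.exp (-(1 / (32 * t)) * ‖z - y‖ ^ 2) * (M * ‖x - z‖) := by
    filter_upwards [hb] with y hy
    rw [Real.norm_eq_abs, ← sub_mul, abs_mul]
    calc |Fk n t e (x - y) - Fk n t e (z - y)| * |φ y|
        ≤ ((4 * (4 * π * t) ^ (-(n : ℝ) / 2) / t) *
            Real.exp (-(1 / (32 * t)) * ‖z - y‖ ^ 2) * ‖x - z‖) * M := by
          apply mul_le_mul (Fk_lip ht he hxz y) hy (abs_nonneg _) (by positivity)
      _ = (4 * (4 * π * t) ^ (-(n : ℝ) / 2) / t) *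
            Real.exp (-(1 / (32 * t)) * ‖z - y‖ ^ 2) * (M * ‖x - z‖) := by ring
  have h32 : π / (1 / (32 * t)) = 32 * π * t := by
    field_simp
  calc |∫ y : Eu n, (Fk n t e (x - y) * φ y - Fk n t e (z - y) * φ y)|
      ≤ ∫ y : Eu n, (4 * (4 * π * t) ^ (-(n : ℝ) / 2) / t) *
          Real.exp (-(1 / (32 * t)) * ‖z - y‖ ^ 2) * (M * ‖x - z‖) := by
        rw [← Real.norm_eq_abs]
        exact norm_integral_le_of_norm_le hint hle
    _ = (4 * (4 * π * t) ^ (-(n : ℝ) / 2) / t) *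
          (∫ y : Eu n, Real.exp (-(1 / (32 * t)) * ‖z - y‖ ^ 2)) * (M * ‖x - z‖) := by
        rw [MeasureTheory.integral_mul_const, MeasureTheory.integral_const_mul]
    _ = (4 * (4 * π * t) ^ (-(n : ℝ) / 2) / t) * (32 * π * t) ^ ((n : ℝ) / 2) *
          (M * ‖x - z‖) := by
        rw [gauss_shift_integral _ hβ, h32]

lemma pow_collapse (ht : 0 < t) {u : ℝ} (hu : 0 < u) :
    (4 * π * t) ^ (-(n : ℝ) / 2) * (u * π * t) ^ ((n : ℝ) / 2) = (u / 4) ^ ((n : ℝ) / 2) := by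
  have h4 : (0:ℝ) < 4 * π * t := by positivity
  have hu' : (0:ℝ) < u * π * t := by positivity
  rw [show (-(n : ℝ) / 2) = -((n : ℝ) / 2) by ring, Real.rpow_neg h4.le, inv_mul_eq_div,
    ← Real.div_rpow hu'.le h4.le]
  congr 1
  field_simp


lemma tpow_helper {t : ℝ} (ht : 0 < t) (γ : ℝ) :
    Real.sqrt t * (Real.sqrt t) ^ γ = t ^ ((1 + γ) / 2) := by
  rw [Real.sqrt_eq_rpow]
  have h1 : ((t : ℝ) ^ ((1:ℝ)/2)) ^ γ = t ^ ((1/2) * γ) := (Real.rpow_mul ht.le _ _).symm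
  rw [h1, ← Real.rpow_add ht]
  congr 1
  ring

lemma case2_exp {t : ℝ} (ht : 0 < t) {γ : ℝ} (hγ0 : 0 < γ) {d : ℝ}
    (hd : Real.sqrt t ≤ d) :
    1 / Real.sqrt t ≤ t ^ (-(1 + γ) / 2) * d ^ γ := by
  have hs : 0 < Real.sqrt t := Real.sqrt_pos.2 ht
  have hd0 : 0 < d := lt_of_lt_of_le hs hd
  have h1 : (Real.sqrt t) ^ γ ≤ d ^ γ :=
    Real.rpow_le_rpow hs.le hd hγ0.le
  have h2 : 0 < (Real.sqrt t) ^ γ := Real.rpow_pos_of_pos hs _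
  have key : 1 / Real.sqrt t = t ^ (-(1 + γ) / 2) * (Real.sqrt t) ^ γ := by
    rw [show (-(1 + γ) / 2) = -((1 + γ) / 2) by ring, Real.rpow_neg ht.le,
      ← tpow_helper ht γ]
    field_simp
  rw [key]
  exact mul_le_mul_of_nonneg_left h1 (by positivity)

lemma case1_exp {t : ℝ} (ht : 0 < t) {γ : ℝ} (hγ0 : 0 < γ) (hγ1 : γ < 1) {d : ℝ}
    (hd0 : 0 < d) (hd : d ≤ Real.sqrt t) :
    d / t ≤ t ^ (-(1 + γ) / 2) * d ^ γ := by
  have hs : 0 < Real.sqrt t := Real.sqrt_pos.2 ht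
  have h1 : d = d ^ ((1:ℝ) - γ) * d ^ γ := by
    rw [← Real.rpow_add hd0, sub_add_cancel, Real.rpow_one]
  have h2 : d ^ ((1:ℝ) - γ) ≤ (Real.sqrt t) ^ ((1:ℝ) - γ) :=
    Real.rpow_le_rpow hd0.le hd (by linarith)
  have h3 : (Real.sqrt t) ^ ((1:ℝ) - γ) / t = t ^ (-(1 + γ) / 2) := by
    rw [Real.sqrt_eq_rpow, ← Real.rpow_mul ht.le, div_eq_mul_inv, ← Real.rpow_neg_one t,
      ← Real.rpow_add ht]
    congr 1
    ring
  calc d / t = (d ^ ((1:ℝ) - γ) * d ^ γ) / t := by rw [← h1]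
    _ ≤ ((Real.sqrt t) ^ ((1:ℝ) - γ) * d ^ γ) / t := by
        gcongr
    _ = t ^ (-(1 + γ) / 2) * d ^ γ := by
        rw [← h3]; ring

end S19

/-- Hölder estimate for the spatial gradient of the heat semigroup:
`[(∂H/∂x_j)(t) * φ]_γ ≤ C t^{-(1+γ)/2} ‖φ‖_{L^∞}`. -/
theorem statement19 (n : ℕ) (hn : 1 ≤ n) (γ : ℝ) (hγ : γ ∈ Ioo (0:ℝ) 1) :
    ∃ C > (0:ℝ), ∀ (t : ℝ), 0 < t → ∀ (j : Fin n) (φ : Eu n → ℝ), MemLp φ ⊤ volume →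
      ∀ x z : Eu n, x ≠ z →
        |(∫ y : Eu n, fderiv ℝ (heatK n 1 t) (x - y) (EuclideanSpace.single j 1) * φ y)
          - ∫ y : Eu n, fderiv ℝ (heatK n 1 t) (z - y) (EuclideanSpace.single j 1) * φ y|
          ≤ C * t ^ (-(1 + γ) / 2) * (eLpNorm φ ⊤ volume).toReal * ‖x - z‖ ^ γ := by
  obtain ⟨hγ0, hγ1⟩ := hγ
  refine ⟨2 * (2 : ℝ) ^ ((n:ℝ)/2) + 4 * (8 : ℝ) ^ ((n:ℝ)/2), by positivity, ?_⟩
  intro t ht j φ hφ x z hxz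
  have hs : 0 < Real.sqrt t := Real.sqrt_pos.2 ht
  have hc : 0 < (4 * π * t) ^ (-(n : ℝ) / 2) := Real.rpow_pos_of_pos (by positivity) _
  set e : Eu n := EuclideanSpace.single j 1 with hedef
  have he : ‖e‖ = 1 := by simp [hedef, EuclideanSpace.norm_single]
  set M := (eLpNorm φ ⊤ volume).toReal with hMdef
  have hM : 0 ≤ M := ENNReal.toReal_nonneg
  have hb : ∀ᵐ y : Eu n ∂volume, |φ y| ≤ M := S19.ae_abs_le hφ
  have hφm : AEStronglyMeasurable φ (volume : Measure (Eu n)) := hφ.aestronglyMeasurable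
  have hnorm : 0 < ‖x - z‖ := by
    rw [norm_pos_iff, sub_ne_zero]; exact hxz
  have hγnorm : 0 < ‖x - z‖ ^ γ := Real.rpow_pos_of_pos hnorm _
  have htp : 0 < t ^ (-(1 + γ) / 2) := Real.rpow_pos_of_pos ht _
  simp only [S19.fderiv_heatK_apply ht]
  rcases le_or_gt ‖x - z‖ (Real.sqrt t) with hcase | hcase
  · -- Lipschitz regime
    have key := S19.conv_diff_le ht he hφm hM hb hcase
    have c32 : (4 * π * t) ^ (-(n : ℝ) / 2) * (32 * π * t) ^ ((n : ℝ) / 2)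
        = (8 : ℝ) ^ ((n : ℝ)/2) := by
      have := S19.pow_collapse (n := n) ht (u := 32) (by norm_num)
      rw [this]; norm_num
    have hRHS : (4 * (4 * π * t) ^ (-(n : ℝ) / 2) / t) * (32 * π * t) ^ ((n : ℝ) / 2) *
        (M * ‖x - z‖) = 4 * (8 : ℝ) ^ ((n : ℝ)/2) * M * (‖x - z‖ / t) := by
      rw [show (4 * (4 * π * t) ^ (-(n : ℝ) / 2) / t) * (32 * π * t) ^ ((n : ℝ) / 2) *
          (M * ‖x - z‖) = 4 * ((4 * π * t) ^ (-(n : ℝ) / 2) * (32 * π * t) ^ ((n : ℝ) / 2)) *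
          M * (‖x - z‖ / t) by ring, c32]
    rw [hRHS] at key
    refine key.trans ?_
    have hce := S19.case1_exp ht hγ0 hγ1 hnorm hcase
    calc 4 * (8 : ℝ) ^ ((n : ℝ)/2) * M * (‖x - z‖ / t)
        ≤ 4 * (8 : ℝ) ^ ((n : ℝ)/2) * M * (t ^ (-(1 + γ) / 2) * ‖x - z‖ ^ γ) := by
          apply mul_le_mul_of_nonneg_left hce (by positivity)
      _ ≤ (2 * (2 : ℝ) ^ ((n:ℝ)/2) + 4 * (8 : ℝ) ^ ((n:ℝ)/2)) * t ^ (-(1 + γ) / 2) * M *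
          ‖x - z‖ ^ γ := by
          have h2pos : (0:ℝ) < (2 : ℝ) ^ ((n:ℝ)/2) := Real.rpow_pos_of_pos (by norm_num) _
          have h8pos : (0:ℝ) < (8 : ℝ) ^ ((n:ℝ)/2) := Real.rpow_pos_of_pos (by norm_num) _
          nlinarith [mul_pos htp hγnorm, mul_nonneg (mul_nonneg htp.le hM) hγnorm.le,
            mul_nonneg (mul_nonneg (mul_nonneg h2pos.le htp.le) hM) hγnorm.le]
  · -- sup-norm regime
    have k1 := S19.conv_abs_le ht he hM hb x
    have k2 := S19.conv_abs_le ht he hM hb z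
    have c8 : (4 * π * t) ^ (-(n : ℝ) / 2) * (8 * π * t) ^ ((n : ℝ) / 2)
        = (2 : ℝ) ^ ((n : ℝ)/2) := by
      have := S19.pow_collapse (n := n) ht (u := 8) (by norm_num)
      rw [this]; norm_num
    have htri : |(∫ y : Eu n, S19.Fk n t e (x - y) * φ y)
        - ∫ y : Eu n, S19.Fk n t e (z - y) * φ y|
        ≤ 2 * ((4 * π * t) ^ (-(n : ℝ) / 2) / Real.sqrt t * (8 * π * t) ^ ((n : ℝ) / 2) * M) := by
      calc |(∫ y : Eu n, S19.Fk n t e (x - y) * φ y)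
          - ∫ y : Eu n, S19.Fk n t e (z - y) * φ y|
          ≤ |∫ y : Eu n, S19.Fk n t e (x - y) * φ y| +
            |∫ y : Eu n, S19.Fk n t e (z - y) * φ y| := abs_sub _ _
        _ ≤ 2 * ((4 * π * t) ^ (-(n : ℝ) / 2) / Real.sqrt t * (8 * π * t) ^ ((n : ℝ) / 2) * M) := by
            linarith
    have hRHS : 2 * ((4 * π * t) ^ (-(n : ℝ) / 2) / Real.sqrt t * (8 * π * t) ^ ((n : ℝ) / 2) * M)
        = 2 * (2 : ℝ) ^ ((n : ℝ)/2) * M * (1 / Real.sqrt t) := by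
      rw [show 2 * ((4 * π * t) ^ (-(n : ℝ) / 2) / Real.sqrt t * (8 * π * t) ^ ((n : ℝ) / 2) * M)
          = 2 * ((4 * π * t) ^ (-(n : ℝ) / 2) * (8 * π * t) ^ ((n : ℝ) / 2)) * M *
          (1 / Real.sqrt t) by ring, c8]
    rw [hRHS] at htri
    refine htri.trans ?_
    have hce := S19.case2_exp ht hγ0 hcase.le
    calc 2 * (2 : ℝ) ^ ((n : ℝ)/2) * M * (1 / Real.sqrt t)
        ≤ 2 * (2 : ℝ) ^ ((n : ℝ)/2) * M * (t ^ (-(1 + γ) / 2) * ‖x - z‖ ^ γ) := by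
          apply mul_le_mul_of_nonneg_left hce (by positivity)
      _ ≤ (2 * (2 : ℝ) ^ ((n:ℝ)/2) + 4 * (8 : ℝ) ^ ((n:ℝ)/2)) * t ^ (-(1 + γ) / 2) * M *
          ‖x - z‖ ^ γ := by
          have h2pos : (0:ℝ) < (2 : ℝ) ^ ((n:ℝ)/2) := Real.rpow_pos_of_pos (by norm_num) _
          have h8pos : (0:ℝ) < (8 : ℝ) ^ ((n:ℝ)/2) := Real.rpow_pos_of_pos (by norm_num) _
          nlinarith [mul_pos htp hγnorm, mul_nonneg (mul_nonneg htp.le hM) hγnorm.le,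
            mul_nonneg (mul_nonneg (mul_nonneg h8pos.le htp.le) hM) hγnorm.le]
end
end
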